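/- arXiv:2012.01820 — 5 statements merged into one kernel-verified Lean document; each statement's English description precedes it below -/
import Mathlib

section
/- Let U ⊆ ℂⁿ be open and let N ⊆ U be a connected real-analytic submanifold, encoded by real-analytic functions ρ₁,…,ρ_r : U → ℝ whose real differentials Dρ₁(p),…,Dρ_r(p) are ℝ-linearly independent at every p ∈ U, with N = {z ∈ U : ρ₁(z) = ⋯ = ρ_r(z) = 0} and T_pN = ⋂_j ker Dρ_j(p). Let p ∈ N and let φ : U → ℂ^ν be holomorphic with φ(p) = 0 and with the complex derivative Dφ(z) of rank ν at every z ∈ U. Assume Z_φ and N are transverse at p as real submanifolds: the sum of ker Dφ(p) (viewed as a real subspace of ℂⁿ) and T_pN is all of ℂⁿ. Then for every open neighborhood W ⊆ U of p there exists ε > 0 such that every holomorphic ψ : W → ℂ^ν with ‖φ − ψ‖_W < ε vanishes at some point of N ∩ W. -/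
open Complex Filter Topology Metric
open scoped ComplexConjugate

noncomputable section

section AuxiliaryLemmas
open Metric Set Function

/-- Schwarz-type Lipschitz estimate: a holomorphic function bounded by `ε` on `ball q (2s)`
is `(2ε/s)`-Lipschitz on `ball q (s/2)`. -/
lemma lip_of_small {E F : Type*} [NormedAddCommGroup E] [NormedSpace ℂ E]
    [NormedAddCommGroup F] [NormedSpace ℂ F]
    {χ : E → F} {q : E} {s ε : ℝ} (hs : 0 < s) (hε : 0 < ε)
    (hχ : DifferentiableOn ℂ χ (ball q (2*s)))
    (hb : ∀ z ∈ ball q (2*s), ‖χ z‖ < ε) :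
    ∀ z ∈ ball q (s/2), ∀ w ∈ ball q (s/2),
      dist (χ z) (χ w) ≤ 2*ε/s * dist z w := by
  intro z hz w hw
  rcases eq_or_ne z w with rfl | hne
  · simp
  have hzw : 0 < ‖z - w‖ := by simpa [sub_eq_zero] using hne
  set R₁ : ℝ := s / ‖z - w‖ with hR₁
  have hR₁pos : 0 < R₁ := div_pos hs hzw
  have hdistzw : ‖z - w‖ < s := by
    have := dist_triangle z q w
    rw [dist_comm q w] at this
    have h1 : dist z q < s/2 := mem_ball.1 hz
    have h2 : dist w q < s/2 := mem_ball.1 hw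
    calc ‖z - w‖ = dist z w := (dist_eq_norm _ _).symm
      _ ≤ dist z q + dist w q := by rw [dist_comm w q]; exact dist_triangle z q w
      _ < s/2 + s/2 := by linarith
      _ = s := by ring
  have h1R₁ : (1:ℝ) < R₁ := (one_lt_div hzw).2 hdistzw
  set g : ℂ → F := fun t => χ (w + t • (z - w)) with hg
  have hmapsα : MapsTo (fun t : ℂ => w + t • (z - w)) (ball 0 R₁) (ball q (2*s)) := by
    intro t ht
    rw [mem_ball] at ht ⊢
    rw [dist_eq_norm] at ht ⊢
    simp only [sub_zero] at ht
    calc ‖w + t • (z - w) - q‖ ≤ ‖w - q‖ + ‖t • (z - w)‖ := by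
          rw [add_sub_right_comm]; exact norm_add_le _ _
      _ = ‖w - q‖ + ‖t‖ * ‖z - w‖ := by rw [norm_smul]
      _ < s/2 + R₁ * ‖z - w‖ := by
          have h2 : ‖w - q‖ < s/2 := by rw [← dist_eq_norm]; exact mem_ball.1 hw
          have : ‖t‖ * ‖z - w‖ < R₁ * ‖z - w‖ := by
            exact mul_lt_mul_of_pos_right ht hzw
          linarith
      _ = s/2 + s := by rw [hR₁, div_mul_cancel₀]; exact ne_of_gt hzw
      _ < 2*s := by linarith
  have hgd : DifferentiableOn ℂ g (ball 0 R₁) := by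
    apply hχ.comp _ hmapsα
    exact ((differentiable_id.smul_const (z - w)).const_add w).differentiableOn
  have hmaps : MapsTo g (ball 0 R₁) (ball (g 0) (2*ε)) := by
    intro t ht
    rw [mem_ball, dist_eq_norm]
    have h0mem : (0:ℂ) ∈ ball (0:ℂ) R₁ := by simpa using hR₁pos
    calc ‖g t - g 0‖ ≤ ‖g t‖ + ‖g 0‖ := norm_sub_le _ _
      _ < ε + ε := add_lt_add (hb _ (hmapsα ht)) (hb _ (hmapsα h0mem))
      _ = 2*ε := by ring
  have h1mem : (1:ℂ) ∈ ball (0:ℂ) R₁ := by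
    rw [mem_ball, dist_zero_right]
    simpa using h1R₁
  have := Complex.dist_le_div_mul_dist_of_mapsTo_ball hgd (hmaps.mono_right ball_subset_closedBall) h1mem
  have hg1 : g 1 = χ z := by simp [hg]
  have hg0 : g 0 = χ w := by simp [hg]
  rw [hg1, hg0] at this
  calc dist (χ z) (χ w) ≤ 2*ε / R₁ * dist (1:ℂ) 0 := this
    _ = 2*ε/s * ‖z - w‖ := by
        rw [dist_zero_right, norm_one, mul_one, hR₁]
        field_simp
    _ = 2*ε/s * dist z w := by rw [dist_eq_norm]
open Metric Set Function Filter
open scoped Topology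

/-- A holomorphic map on an open subset of a finite-dimensional complex vector space is
strictly differentiable at every point. -/
lemma holo_strict {E F : Type*} [NormedAddCommGroup E] [NormedSpace ℂ E] [FiniteDimensional ℂ E]
    [NormedAddCommGroup F] [NormedSpace ℂ F]
    {U : Set E} (hU : IsOpen U) {f : E → F} (hf : DifferentiableOn ℂ f U)
    {p : E} (hp : p ∈ U) : HasStrictFDerivAt f (fderiv ℂ f p) p := by
  obtain ⟨ε₀, hε₀, hball⟩ := Metric.mem_nhds_iff.1 (hU.mem_nhds hp)
  set R : ℝ := ε₀ / 4 with hR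
  have hRpos : 0 < R := by positivity
  have hKU : closedBall p (3*R) ⊆ U := by
    refine (fun x hx => hball ?_)
    rw [mem_closedBall] at hx
    rw [mem_ball]
    calc dist x p ≤ 3*R := hx
      _ < ε₀ := by rw [hR]; linarith
  have hKcomp : IsCompact (closedBall p (3*R)) := isCompact_closedBall _ _
  have hfc : UniformContinuousOn f (closedBall p (3*R)) :=
    hKcomp.uniformContinuousOn_of_continuous (hf.continuousOn.mono hKU)
  -- the key estimate on differences of derivatives
  have key : ∀ c : ℝ, 0 < c → ∃ δ : ℝ, 0 < δ ∧ δ ≤ R ∧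
      ∀ z ∈ ball p δ, ‖fderiv ℂ f z - fderiv ℂ f p‖ ≤ c := by
    intro c hc
    have hη : (0:ℝ) < c * R / 4 := by positivity
    obtain ⟨δ₀, hδ₀, hUC⟩ := (Metric.uniformContinuousOn_iff).1 hfc (c*R/4) hη
    refine ⟨min δ₀ R, lt_min hδ₀ hRpos, min_le_right _ _, ?_⟩
    intro z hz
    have hzR : dist z p < R := lt_of_lt_of_le (mem_ball.1 hz) (min_le_right _ _)
    have hzδ : dist z p < δ₀ := lt_of_lt_of_le (mem_ball.1 hz) (min_le_left _ _)
    have hzU : z ∈ U := hKU (mem_closedBall.2 (by linarith))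
    refine ContinuousLinearMap.opNorm_le_bound _ hc.le ?_
    intro w
    rcases eq_or_ne w 0 with rfl | hw
    · simp
    have hwn : (0:ℝ) < ‖w‖ := norm_pos_iff.2 hw
    set w₁ : E := (R/‖w‖ : ℝ) • w with hw₁
    have hw₁n : ‖w₁‖ = R := by
      rw [hw₁, norm_smul, Real.norm_eq_abs, abs_of_pos (by positivity)]
      field_simp
    -- the auxiliary one-variable function
    set d : ℂ → F := fun t => f (z + t • w₁) - f (p + t • w₁) with hd
    have hmem : ∀ t : ℂ, t ∈ ball (0:ℂ) 2 →
        z + t • w₁ ∈ closedBall p (3*R) ∧ p + t • w₁ ∈ closedBall p (3*R) := by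
      intro t ht
      have htn : ‖t‖ < 2 := by simpa [dist_eq_norm] using mem_ball.1 ht
      have h1 : ‖t • w₁‖ ≤ 2 * R := by
        rw [norm_smul, hw₁n]
        exact mul_le_mul_of_nonneg_right htn.le hRpos.le
      constructor
      · rw [mem_closedBall, dist_eq_norm]
        calc ‖z + t • w₁ - p‖ ≤ ‖z - p‖ + ‖t • w₁‖ := by
              rw [add_sub_right_comm]; exact norm_add_le _ _
          _ ≤ R + 2*R := add_le_add (by rw [← dist_eq_norm]; exact hzR.le) h1
          _ = 3*R := by ring
      · rw [mem_closedBall, dist_eq_norm]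
        calc ‖p + t • w₁ - p‖ = ‖t • w₁‖ := by rw [add_sub_cancel_left]
          _ ≤ 2*R := h1
          _ ≤ 3*R := by linarith
    have hdd : DifferentiableOn ℂ d (ball (0:ℂ) 2) := by
      intro t ht
      have h1 := (hmem t ht).1
      have h2 := (hmem t ht).2
      have hα : ∀ q : E, DifferentiableAt ℂ (fun s : ℂ => q + s • w₁) t :=
        fun q => ((differentiable_id.smul_const w₁).const_add q).differentiableAt
      exact (((hf.differentiableAt (hU.mem_nhds (hKU h1))).comp t (hα z)).sub
        ((hf.differentiableAt (hU.mem_nhds (hKU h2))).comp t (hα p))).differentiableWithinAt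
    have hdb : ∀ t : ℂ, t ∈ ball (0:ℂ) 2 → ‖d t‖ < c*R/4 := by
      intro t ht
      have h1 := (hmem t ht).1
      have h2 := (hmem t ht).2
      have : dist (z + t • w₁) (p + t • w₁) < δ₀ := by
        rw [dist_eq_norm]
        simpa [add_sub_add_right_eq_sub, ← dist_eq_norm] using hzδ
      have := hUC _ h1 _ h2 this
      rwa [dist_eq_norm] at this
    have hmaps : MapsTo d (ball (0:ℂ) 2) (ball (d 0) (c*R/2)) := by
      intro t ht
      rw [mem_ball, dist_eq_norm]
      have h0 : (0:ℂ) ∈ ball (0:ℂ) 2 := by simp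
      calc ‖d t - d 0‖ ≤ ‖d t‖ + ‖d 0‖ := norm_sub_le _ _
        _ < c*R/4 + c*R/4 := add_lt_add (hdb t ht) (hdb 0 h0)
        _ = c*R/2 := by ring
    have hschwarz := Complex.norm_deriv_le_div_of_mapsTo_ball hdd (hmaps.mono_right ball_subset_closedBall) (by norm_num : (0:ℝ) < 2)
    -- compute deriv d 0
    have hder : HasDerivAt d ((fderiv ℂ f z) w₁ - (fderiv ℂ f p) w₁) 0 := by
      have hα : ∀ q : E, HasDerivAt (fun s : ℂ => q + s • w₁) w₁ 0 := by
        intro q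
        have h := ((hasDerivAt_id (0:ℂ)).smul_const w₁).const_add q
        simpa using h
      have h0z : (0:ℂ) • w₁ = 0 := by simp
      have h1 : HasDerivAt (fun t : ℂ => f (z + t • w₁)) ((fderiv ℂ f z) w₁) 0 := by
        have hfz : HasFDerivAt f (fderiv ℂ f z) (z + (0:ℂ) • w₁) := by
          rw [h0z, add_zero]
          exact (hf.differentiableAt (hU.mem_nhds hzU)).hasFDerivAt
        exact (hfz.comp_hasDerivAt 0 (hα z))
      have h2 : HasDerivAt (fun t : ℂ => f (p + t • w₁)) ((fderiv ℂ f p) w₁) 0 := by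
        have hfp : HasFDerivAt f (fderiv ℂ f p) (p + (0:ℂ) • w₁) := by
          rw [h0z, add_zero]
          exact (hf.differentiableAt (hU.mem_nhds hp)).hasFDerivAt
        exact (hfp.comp_hasDerivAt 0 (hα p))
      exact h1.sub h2
    rw [hder.deriv] at hschwarz
    -- rescale
    have hscale : (fderiv ℂ f z) w - (fderiv ℂ f p) w
        = ((‖w‖/R : ℝ) : ℂ) • ((fderiv ℂ f z) w₁ - (fderiv ℂ f p) w₁) := by
      have hw' : ((‖w‖/R : ℝ) : ℂ) • w₁ = w := by
        rw [hw₁, ← Complex.coe_smul, smul_smul, ← Complex.ofReal_mul]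
        have h9 : (‖w‖/R) * (R/‖w‖) = 1 := by field_simp
        rw [h9, Complex.ofReal_one, one_smul]
      rw [smul_sub, ← map_smul, ← map_smul, hw']
    calc ‖(fderiv ℂ f z - fderiv ℂ f p) w‖
        = ‖(fderiv ℂ f z) w - (fderiv ℂ f p) w‖ := by
          rw [ContinuousLinearMap.sub_apply]
      _ = ‖w‖/R * ‖(fderiv ℂ f z) w₁ - (fderiv ℂ f p) w₁‖ := by
          rw [hscale, norm_smul]
          congr 1
          rw [Complex.norm_real, Real.norm_eq_abs, abs_of_pos (by positivity)]
      _ ≤ ‖w‖/R * (c*R/2/2) := by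
          apply mul_le_mul_of_nonneg_left hschwarz (by positivity)
      _ = c * ‖w‖ / 4 := by field_simp; ring
      _ ≤ c * ‖w‖ := div_le_self (by positivity) (by norm_num)
  -- now prove strict differentiability
  refine HasStrictFDerivAt.of_isLittleO (Asymptotics.isLittleO_iff.2 ?_)
  intro c hc
  obtain ⟨δ, hδ, hδR, hbound⟩ := key c hc
  have hmem : ball p δ ×ˢ ball p δ ∈ 𝓝 (p, p) :=
    prod_mem_nhds (ball_mem_nhds _ hδ) (ball_mem_nhds _ hδ)
  filter_upwards [hmem] with q hq
  have hq1 : q.1 ∈ ball p δ := hq.1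
  have hq2 : q.2 ∈ ball p δ := hq.2
  have hsub : ball p δ ⊆ U := by
    intro x hx
    apply hKU
    rw [mem_closedBall]
    calc dist x p ≤ δ := (mem_ball.1 hx).le
      _ ≤ 3*R := by linarith
  have := Convex.norm_image_sub_le_of_norm_hasFDerivWithin_le'
    (f' := fun z => fderiv ℂ f z) (φ := fderiv ℂ f p) (s := ball p δ)
    (fun x hx => (hf.differentiableAt (hU.mem_nhds (hsub hx))).hasFDerivAt.hasFDerivWithinAt)
    (fun x hx => hbound x hx) (convex_ball p δ) hq2 hq1
  simpa using this

/-- A finite family of linearly independent functionals is jointly surjective. -/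
lemma pi_surj_of_linearIndependent {𝕜 E : Type*} [Field 𝕜] [AddCommGroup E] [Module 𝕜 E]
    {r : ℕ} {f : Fin r → E →ₗ[𝕜] 𝕜} (h : LinearIndependent 𝕜 f) :
    Function.Surjective (fun x (j : Fin r) => f j x) := by
  set B : E →ₗ[𝕜] (Fin r → 𝕜) := LinearMap.pi f with hB
  have hBs : Function.Surjective ⇑B := by
    by_contra hns
    have hlt : LinearMap.range B < ⊤ := lt_top_iff_ne_top.2 (fun htp => hns
      (LinearMap.range_eq_top.1 htp))
    obtain ⟨lam, hlam0, hker⟩ := Submodule.exists_le_ker_of_lt_top _ hlt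
    set g : Fin r → 𝕜 := fun j => lam (Pi.single j 1) with hg
    have hrepr : ∀ y : Fin r → 𝕜, lam y = ∑ j, y j * g j := by
      intro y
      have hy : y = ∑ j, y j • (Pi.single j (1:𝕜) : Fin r → 𝕜) := by
        ext i
        simp [Finset.sum_apply, Pi.single_apply]
      calc lam y = lam (∑ j, y j • (Pi.single j (1:𝕜) : Fin r → 𝕜)) := by rw [← hy]
        _ = ∑ j, y j * g j := by
            rw [map_sum]
            congr 1
            ext j
            rw [map_smul, smul_eq_mul]
    have hzero : ∀ x : E, ∑ j, g j * f j x = 0 := by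
      intro x
      have hx : lam (B x) = 0 := hker (LinearMap.mem_range.2 ⟨x, rfl⟩)
      rw [hrepr (B x)] at hx
      rw [← hx]
      congr 1
      ext j
      rw [mul_comm]
      rfl
    have hg0 : ∀ j, g j = 0 := by
      have := Fintype.linearIndependent_iff.1 h g ?_
      · exact this
      · ext x
        simpa [LinearMap.sum_apply, LinearMap.smul_apply, smul_eq_mul] using hzero x
    apply hlam0
    apply LinearMap.ext
    intro y
    rw [hrepr y]
    simp [hg0]
  exact hBs

end AuxiliaryLemmas

set_option maxHeartbeats 1000000

/-- If `Z_φ` (with `Dφ` of full rank `ν`) and `N` are transverse at `p` as real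
submanifolds, then the zero of `φ` on `N` cannot be perturbed away. -/
theorem zeros_cannot_be_perturbed_away_transversal {n ν r : ℕ}
    (U : Set (Fin n → ℂ)) (hU : IsOpen U)
    (ρ : Fin r → (Fin n → ℂ) → ℝ)
    (hρa : ∀ j, AnalyticOn ℝ (ρ j) U)
    (hind : ∀ p ∈ U, LinearIndependent ℝ (fun j => fderiv ℝ (ρ j) p))
    (N : Set (Fin n → ℂ)) (hN : N = {z | z ∈ U ∧ ∀ j, ρ j z = 0})
    (hNconn : IsConnected N)
    (p : Fin n → ℂ) (hp : p ∈ N)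
    (φ : (Fin n → ℂ) → (Fin ν → ℂ)) (hφ : DifferentiableOn ℂ φ U) (hφp : φ p = 0)
    (hrank : ∀ z ∈ U,
      Module.finrank ℂ (LinearMap.range ((fderiv ℂ φ z).toLinearMap)) = ν)
    -- transversality: `ker Dφ(p) + T_pN = ℂⁿ` as real subspaces
    (htrans : ∀ x : Fin n → ℂ, ∃ u v : Fin n → ℂ,
      fderiv ℂ φ p u = 0 ∧ (∀ j, fderiv ℝ (ρ j) p v = 0) ∧ x = u + v) :
    ∀ W : Set (Fin n → ℂ), IsOpen W → p ∈ W → W ⊆ U →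
      ∃ ε > (0 : ℝ), ∀ ψ : (Fin n → ℂ) → (Fin ν → ℂ), DifferentiableOn ℂ ψ W →
        (∀ z ∈ W, ‖φ z - ψ z‖ < ε) → ∃ z ∈ N ∩ W, ψ z = 0 := by
  have hpU : p ∈ U := by rw [hN] at hp; exact hp.1
  have hρp : ∀ j, ρ j p = 0 := by rw [hN] at hp; exact hp.2
  set Φ' : (Fin n → ℂ) →L[ℝ] (Fin ν → ℂ) := (fderiv ℂ φ p).restrictScalars ℝ with hΦ'
  set R' : (Fin n → ℂ) →L[ℝ] (Fin r → ℝ) := ContinuousLinearMap.pi (fun j => fderiv ℝ (ρ j) p) with hR'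
  set D : (Fin n → ℂ) →L[ℝ] ((Fin ν → ℂ) × (Fin r → ℝ)) := Φ'.prod R' with hD
  set h : (Fin n → ℂ) → ((Fin ν → ℂ) × (Fin r → ℝ)) := fun z => (φ z, fun j => ρ j z) with hh
  -- strict differentiability of h at p
  have hφs : HasStrictFDerivAt φ (fderiv ℂ φ p) p := holo_strict hU hφ hpU
  have hφsR : HasStrictFDerivAt φ Φ' p := hφs.restrictScalars ℝ
  have hρs : ∀ j, HasStrictFDerivAt (ρ j) (fderiv ℝ (ρ j) p) p := fun j =>
    ((hU.analyticOn_iff_analyticOnNhd.mp (hρa j)) p hpU).hasStrictFDerivAt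
  have hρpi : HasStrictFDerivAt (fun z => fun j => ρ j z) R' p := by
    apply hasStrictFDerivAt_pi''
    intro i
    rw [hR', ContinuousLinearMap.proj_pi]
    exact hρs i
  have hhs : HasStrictFDerivAt h D p := hφsR.prodMk hρpi
  -- surjectivity of D
  have hΦsurj : Function.Surjective ⇑(fderiv ℂ φ p) := by
    have hrg : LinearMap.range (fderiv ℂ φ p).toLinearMap = ⊤ := by
      apply Submodule.eq_top_of_finrank_eq
      rw [hrank p hpU]
      simp [Module.finrank_pi]
    intro w
    obtain ⟨x, hx⟩ := LinearMap.range_eq_top.1 hrg w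
    exact ⟨x, hx⟩
  have hRsurj : Function.Surjective ⇑R' := by
    have hli : LinearIndependent ℝ (fun j => ((fderiv ℝ (ρ j) p : (Fin n → ℂ) →L[ℝ] ℝ) :
        (Fin n → ℂ) →ₗ[ℝ] ℝ)) := by
      have hinj : Function.Injective (ContinuousLinearMap.coeLM ℝ :
          ((Fin n → ℂ) →L[ℝ] ℝ) →ₗ[ℝ] ((Fin n → ℂ) →ₗ[ℝ] ℝ)) := fun a b hab => by
        apply ContinuousLinearMap.coe_injective
        exact hab
      exact (hind p hpU).map' _ (LinearMap.ker_eq_bot.2 hinj)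
    have := pi_surj_of_linearIndependent hli
    intro s
    obtain ⟨x, hx⟩ := this s
    exact ⟨x, by rw [hR']; exact hx⟩
  have hDsurj : Function.Surjective ⇑D := by
    rintro ⟨w, s⟩
    obtain ⟨x₁, hx₁⟩ := hΦsurj w
    obtain ⟨u, v, huv1, huv2, huv3⟩ := htrans x₁
    have hv : fderiv ℂ φ p v = w := by
      rw [huv3, map_add, huv1, zero_add] at hx₁; exact hx₁
    obtain ⟨y, hy⟩ := hRsurj s
    obtain ⟨u', v', hu'1, hu'2, hu'3⟩ := htrans y
    have hu' : R' u' = s := by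
      rw [← hy, hu'3, map_add]
      have : R' v' = 0 := by
        rw [hR']
        ext j
        simpa using hu'2 j
      rw [this, add_zero]
    refine ⟨v + u', ?_⟩
    rw [hD]
    have h1 : Φ' (v + u') = w := by
      rw [hΦ']
      show (fderiv ℂ φ p) (v + u') = w
      rw [map_add, hv, hu'1, add_zero]
    have h2 : R' (v + u') = s := by
      rw [map_add, hu']
      have : R' v = 0 := by
        rw [hR']; ext j; simpa using huv2 j
      rw [this, zero_add]
    exact Prod.ext h1 h2
  -- right inverse of D
  obtain ⟨j0, hj0⟩ := D.toLinearMap.exists_rightInverse_of_surjective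
    (LinearMap.range_eq_top.2 hDsurj)
  set J : ((Fin ν → ℂ) × (Fin r → ℝ)) →L[ℝ] (Fin n → ℂ) := LinearMap.toContinuousLinearMap j0 with hJ
  have hDJ : ∀ y, D (J y) = y := fun y => LinearMap.congr_fun hj0 y
  set k : ((Fin ν → ℂ) × (Fin r → ℝ)) → (Fin n → ℂ) := fun y => p + J y with hk
  set f0 : ((Fin ν → ℂ) × (Fin r → ℝ)) → ((Fin ν → ℂ) × (Fin r → ℝ)) := fun y => h (k y) with hf0
  have hk0 : k 0 = p := by simp [hk]
  have hkstrict : HasStrictFDerivAt k (J : ((Fin ν → ℂ) × (Fin r → ℝ)) →L[ℝ] (Fin n → ℂ)) 0 :=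
    J.hasStrictFDerivAt.const_add p
  have hhs' : HasStrictFDerivAt h D (k 0) := hk0 ▸ hhs
  have hcomp : HasStrictFDerivAt f0 (D.comp (J : ((Fin ν → ℂ) × (Fin r → ℝ)) →L[ℝ] (Fin n → ℂ))) 0 := hhs'.comp 0 hkstrict
  have hDJid : D.comp (J : ((Fin ν → ℂ) × (Fin r → ℝ)) →L[ℝ] (Fin n → ℂ)) =
      ((ContinuousLinearEquiv.refl ℝ ((Fin ν → ℂ) × (Fin r → ℝ)) : ((Fin ν → ℂ) × (Fin r → ℝ)) ≃L[ℝ] ((Fin ν → ℂ) × (Fin r → ℝ))) : ((Fin ν → ℂ) × (Fin r → ℝ)) →L[ℝ] ((Fin ν → ℂ) × (Fin r → ℝ))) := by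
    apply ContinuousLinearMap.ext
    intro y
    simp [hDJ y]
  have hstrict : HasStrictFDerivAt f0
      ((ContinuousLinearEquiv.refl ℝ ((Fin ν → ℂ) × (Fin r → ℝ)) : ((Fin ν → ℂ) × (Fin r → ℝ)) ≃L[ℝ] ((Fin ν → ℂ) × (Fin r → ℝ))) : ((Fin ν → ℂ) × (Fin r → ℝ)) →L[ℝ] ((Fin ν → ℂ) × (Fin r → ℝ))) 0 := by
    rw [← hDJid]; exact hcomp
  set g : ((Fin ν → ℂ) × (Fin r → ℝ)) → ((Fin ν → ℂ) × (Fin r → ℝ)) := hstrict.localInverse f0 _ 0 with hg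
  have hf00 : f0 0 = 0 := by
    rw [hf0]
    show h (k 0) = 0
    rw [hk0, hh]
    show (φ p, fun j => ρ j p) = 0
    rw [hφp]
    exact Prod.ext rfl (funext hρp)
  have hri : ∀ᶠ y in 𝓝 (0:((Fin ν → ℂ) × (Fin r → ℝ))), f0 (g y) = y := by
    have := hstrict.eventually_right_inverse
    rwa [hf00] at this
  have hg0 : g 0 = 0 := by
    have := hstrict.localInverse_apply_image
    rwa [hf00] at this
  obtain ⟨K, t, ht, hgLip⟩ := hstrict.to_localInverse.exists_lipschitzOnWith
  rw [hf00] at ht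
  set σ : ((Fin ν → ℂ) × (Fin r → ℝ)) → (Fin n → ℂ) := fun y => p + J (g y) with hσ
  have hσ0 : σ 0 = p := by simp [hσ, hg0]
  set L : ℝ := ‖J‖ * (K:ℝ) + 1 with hL
  have hLpos : 0 < L := by positivity
  have hσlip : ∀ y ∈ t, ∀ y' ∈ t, dist (σ y) (σ y') ≤ L * dist y y' := by
    intro y hy y' hy'
    rw [hσ]
    show dist (p + J (g y)) (p + J (g y')) ≤ L * dist y y'
    rw [dist_add_left]
    calc dist (J (g y)) (J (g y')) ≤ ‖J‖ * dist (g y) (g y') := by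
          have := J.lipschitz.dist_le_mul (g y) (g y')
          simpa using this
      _ ≤ ‖J‖ * ((K:ℝ) * dist y y') := by
          apply mul_le_mul_of_nonneg_left (hgLip.dist_le_mul y hy y' hy') (norm_nonneg _)
      _ = (‖J‖ * (K:ℝ)) * dist y y' := by ring
      _ ≤ L * dist y y' := by
          apply mul_le_mul_of_nonneg_right _ dist_nonneg
          rw [hL]
          linarith
  -- now the quantitative part
  intro W hWopen hpW hWU
  obtain ⟨ε₀, hε₀, hballW⟩ := Metric.mem_nhds_iff.1 (hWopen.mem_nhds hpW)
  set s : ℝ := ε₀ / 2 with hs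
  have hspos : 0 < s := by positivity
  have hballW2 : ball p (2*s) ⊆ W := by
    rw [show 2*s = ε₀ by rw [hs]; ring]
    exact hballW
  have hmemt : t ∩ {y | f0 (g y) = y} ∈ 𝓝 (0:((Fin ν → ℂ) × (Fin r → ℝ))) := inter_mem ht hri
  obtain ⟨δ₁, hδ₁, hδ₁sub⟩ := Metric.mem_nhds_iff.1 hmemt
  set δ₀ : ℝ := min (δ₁/2) (s/(4*L)) with hδ₀
  have hδ₀pos : 0 < δ₀ := lt_min (by positivity) (by positivity)
  have hδ₀δ₁ : ∀ y : ((Fin ν → ℂ) × (Fin r → ℝ)), y ∈ closedBall 0 δ₀ → y ∈ t ∩ {y | f0 (g y) = y} := by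
    intro y hy
    apply hδ₁sub
    rw [mem_ball]
    calc dist y 0 ≤ δ₀ := mem_closedBall.1 hy
      _ ≤ δ₁/2 := min_le_left _ _
      _ < δ₁ := by linarith
  have h0δ₀ : (0:((Fin ν → ℂ) × (Fin r → ℝ))) ∈ closedBall (0:((Fin ν → ℂ) × (Fin r → ℝ))) δ₀ := mem_closedBall_self hδ₀pos.le
  have hσball : ∀ y : ((Fin ν → ℂ) × (Fin r → ℝ)), y ∈ closedBall 0 δ₀ → σ y ∈ ball p (s/2) := by
    intro y hy
    rw [mem_ball]
    have h1 : dist (σ y) (σ 0) ≤ L * dist y 0 :=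
      hσlip y ((hδ₀δ₁ y hy).1) 0 ((hδ₀δ₁ 0 h0δ₀).1)
    rw [hσ0] at h1
    calc dist (σ y) p ≤ L * dist y 0 := h1
      _ ≤ L * δ₀ := mul_le_mul_of_nonneg_left (mem_closedBall.1 hy) hLpos.le
      _ ≤ L * (s/(4*L)) := mul_le_mul_of_nonneg_left (min_le_right _ _) hLpos.le
      _ = s/4 := by field_simp <;> ring
      _ < s/2 := by linarith
  -- choice of ε
  refine ⟨min δ₀ (s/(8*L)), lt_min hδ₀pos (by positivity), ?_⟩
  set ε : ℝ := min δ₀ (s/(8*L)) with hε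
  have hεpos : 0 < ε := lt_min hδ₀pos (by positivity)
  intro ψ hψ hψε
  set χ : (Fin n → ℂ) → (Fin ν → ℂ) := fun z => φ z - ψ z with hχ
  have hχd : DifferentiableOn ℂ χ (ball p (2*s)) :=
    ((hφ.mono (hballW2.trans hWU)).sub (hψ.mono hballW2))
  have hχb : ∀ z ∈ ball p (2*s), ‖χ z‖ < ε := fun z hz => hψε z (hballW2 hz)
  have hχlip := lip_of_small hspos hεpos hχd hχb
  set ι : (Fin ν → ℂ) → ((Fin ν → ℂ) × (Fin r → ℝ)) := fun a => (a, 0) with hι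
  have hιdist : ∀ a b : Fin ν → ℂ, dist (ι a) (ι b) = dist a b := by
    intro a b
    show dist ((a, 0) : ((Fin ν → ℂ) × (Fin r → ℝ))) ((b, 0) : ((Fin ν → ℂ) × (Fin r → ℝ))) = dist a b
    rw [Prod.dist_eq]
    simp only [dist_self]
    exact max_eq_left dist_nonneg
  set S : Set (Fin ν → ℂ) := closedBall 0 δ₀ with hS
  have hιS : ∀ a ∈ S, ι a ∈ closedBall (0:((Fin ν → ℂ) × (Fin r → ℝ))) δ₀ := by
    intro a ha
    rw [mem_closedBall]
    have : dist (ι a) (ι 0) = dist a 0 := hιdist a 0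
    rw [show (0:((Fin ν → ℂ) × (Fin r → ℝ))) = ι 0 from rfl, this]
    exact mem_closedBall.1 ha
  set σ₁ : (Fin ν → ℂ) → (Fin n → ℂ) := fun a => σ (ι a) with hσ₁
  have hσ₁spec : ∀ a ∈ S, φ (σ₁ a) = a ∧ (∀ j, ρ j (σ₁ a) = 0) := by
    intro a ha
    have h1 : f0 (g (ι a)) = ι a := (hδ₀δ₁ _ (hιS a ha)).2
    have h2 : h (σ₁ a) = ι a := h1
    simp only [hh, hι] at h2
    constructor
    · exact congrArg Prod.fst h2
    · intro j
      exact congrFun (congrArg Prod.snd h2) j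
  have hσ₁ball : ∀ a ∈ S, σ₁ a ∈ ball p (s/2) := fun a ha => hσball _ (hιS a ha)
  have hballs : ball p (s/2) ⊆ ball p (2*s) := ball_subset_ball (by linarith)
  set T : (Fin ν → ℂ) → (Fin ν → ℂ) := fun a => χ (σ₁ a) with hT
  have hTmaps : Set.MapsTo T S S := by
    intro a ha
    rw [hS, mem_closedBall, dist_zero_right]
    have h7 : ‖T a‖ < ε := hχb _ (hballs (hσ₁ball a ha))
    have h8 : ε ≤ δ₀ := min_le_left _ _
    linarith
  have hTcontr : ∀ a ∈ S, ∀ b ∈ S, dist (T a) (T b) ≤ (1/2 : ℝ) * dist a b := by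
    intro a ha b hb
    have h1 : dist (T a) (T b) ≤ 2*ε/s * dist (σ₁ a) (σ₁ b) :=
      hχlip _ (hσ₁ball a ha) _ (hσ₁ball b hb)
    have h2 : dist (σ₁ a) (σ₁ b) ≤ L * dist a b := by
      have := hσlip (ι a) ((hδ₀δ₁ _ (hιS a ha)).1) (ι b) ((hδ₀δ₁ _ (hιS b hb)).1)
      rwa [hιdist] at this
    have hεs : ε ≤ s/(8*L) := min_le_right _ _
    calc dist (T a) (T b) ≤ 2*ε/s * (L * dist a b) := by
          refine h1.trans ?_
          apply mul_le_mul_of_nonneg_left h2 (by positivity)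
      _ ≤ (1/2 : ℝ) * dist a b := by
          have hd : (0:ℝ) ≤ dist a b := dist_nonneg
          have key : 2*ε/s * L ≤ 1/2 := by
            have hLne : L ≠ 0 := ne_of_gt hLpos
            have h8 : ε * L ≤ s/8 := by
              calc ε * L ≤ (s/(8*L)) * L := mul_le_mul_of_nonneg_right hεs hLpos.le
                _ = s/8 := by field_simp <;> ring
            rw [div_mul_eq_mul_div, div_le_iff₀ hspos]
            linarith
          calc 2*ε/s * (L * dist a b) = (2*ε/s * L) * dist a b := by ring
            _ ≤ 1/2 * dist a b := mul_le_mul_of_nonneg_right key hd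
  -- Banach fixed point
  have hScomplete : IsComplete S := Metric.isClosed_closedBall.isComplete
  have h0S : (0 : Fin ν → ℂ) ∈ S := mem_closedBall_self hδ₀pos.le
  have hTlip : LipschitzWith (1/2 : NNReal) (hTmaps.restrict T S S) := by
    apply LipschitzWith.of_dist_le_mul
    intro x y
    rw [Subtype.dist_eq, Subtype.dist_eq]
    have h := hTcontr x.1 x.2 y.1 y.2
    have hc : ((1/2 : NNReal) : ℝ) = 1/2 := by norm_num
    rw [hc]
    exact h
  have hcontracting : ContractingWith (1/2 : NNReal) (hTmaps.restrict T S S) :=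
    ⟨by rw [← NNReal.coe_lt_coe]; norm_num, hTlip⟩
  have ha0S : ContractingWith.efixedPoint' T hScomplete hTmaps hcontracting 0 h0S
      (edist_ne_top _ _) ∈ S :=
    ContractingWith.efixedPoint_mem' hScomplete hTmaps hcontracting h0S (edist_ne_top _ _)
  have hfix : Function.IsFixedPt T (ContractingWith.efixedPoint' T hScomplete hTmaps
      hcontracting 0 h0S (edist_ne_top _ _)) :=
    ContractingWith.efixedPoint_isFixedPt' hScomplete hTmaps hcontracting h0S (edist_ne_top _ _)
  set a0 : Fin ν → ℂ := ContractingWith.efixedPoint' T hScomplete hTmaps hcontracting 0 h0S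
    (edist_ne_top _ _) with ha0
  set z : (Fin n → ℂ) := σ₁ a0 with hzdef
  have hspec := hσ₁spec a0 ha0S
  have hzball : z ∈ ball p (s/2) := hσ₁ball a0 ha0S
  have hzW : z ∈ W := hballW2 (hballs hzball)
  have hψz : ψ z = 0 := by
    have hfixeq : φ z - ψ z = a0 := hfix
    have h4 : φ z = a0 := hspec.1
    rw [h4] at hfixeq
    exact sub_eq_self.1 hfixeq
  refine ⟨z, ⟨?_, hzW⟩, hψz⟩
  rw [hN]
  exact ⟨hWU hzW, hspec.2⟩
end
end

section
/- Let ℓ ≥ 1 and let N ⊆ ℂⁿ be a connected real-analytic generic submanifold of codimension 2ℓ or 2ℓ + 1 encoded by defining functions on an open set U. Let F : U → ℂⁿ be holomorphic such that F restricted to N is a diffeomorphism onto its image (encoded: F injective on N, DF(q) injective on T_qN for all q ∈ N) and DF is generically of rank n on U. Consider the map F ⊕ 0 : U → ℂⁿ × ℂ^ℓ, z ↦ (F(z), 0). Then for every p ∈ N there exists an open neighborhood W ⊆ U of p such that for every ε > 0 there is a holomorphic map G : W → ℂⁿ × ℂ^ℓ with ‖G − (F ⊕ 0)‖_W < ε,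 G injective on N ∩ W, DG(q) injective on T_qN for every q ∈ N ∩ W, and rank DG(q) = n for every q ∈ N ∩ W. In other words, G(N ∩ W) is a CR submanifold. -/
open Complex Filter Topology Metric
open scoped ComplexConjugate

noncomputable section

/-- Wirtinger derivative `∂ρ/∂z_l` at `p` of a real-valued function,
via the real Fréchet derivative. -/
def wirt {n : ℕ} (ρ : (Fin n → ℂ) → ℝ) (p : Fin n → ℂ) (l : Fin n) : ℂ :=
  (1/2 : ℂ) * ((fderiv ℝ ρ p (Pi.single l 1 : Fin n → ℂ) : ℂ) -
     Complex.I * (fderiv ℝ ρ p (Complex.I • (Pi.single l 1 : Fin n → ℂ)) : ℂ))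

/-- The real tangent space `T_qN = ⋂ⱼ ker Dρⱼ(q)`, as a real subspace of `ℂⁿ`. -/
def tSub {n k : ℕ} (ρ : Fin k → (Fin n → ℂ) → ℝ) (q : Fin n → ℂ) :
    Submodule ℝ (Fin n → ℂ) :=
  ⨅ j, LinearMap.ker (fderiv ℝ (ρ j) q).toLinearMap

section aux

open Set

lemma continuousOn_fderiv_apply_cx {V E : Type*} [NormedAddCommGroup V] [NormedSpace ℂ V]
    [ProperSpace V] [NormedAddCommGroup E] [NormedSpace ℂ E] [CompleteSpace E]
    {U : Set V} (hU : IsOpen U) {F : V → E} (hF : DifferentiableOn ℂ F U) (v : V) :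
    ContinuousOn (fun z => fderiv ℂ F z v) U := by
  intro a ha
  apply ContinuousAt.continuousWithinAt
  rw [Metric.continuousAt_iff]
  intro ε hε
  obtain ⟨t, ht, htU⟩ : ∃ t > 0, closedBall a t ⊆ U := by
    rcases Metric.isOpen_iff.mp hU a ha with ⟨s, hs, hsub⟩
    exact ⟨s / 2, by positivity, (closedBall_subset_ball (by linarith)).trans hsub⟩
  set r : ℝ := t / (4 * (‖v‖ + 1)) with hr_def
  have hvpos : (0 : ℝ) < ‖v‖ + 1 := by positivity
  have hr : 0 < r := by positivity
  have hmaps : ∀ z ∈ ball a (t / 2), ∀ w : ℂ, w ∈ ball (0 : ℂ) (2 * r) → z + w • v ∈ U := by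
    intro z hz w hw
    apply htU
    rw [mem_closedBall]
    have h1 : dist (z + w • v) a ≤ ‖w • v‖ + dist z a := by
      calc dist (z + w • v) a ≤ dist (z + w • v) z + dist z a := dist_triangle _ _ _
      _ = ‖w • v‖ + dist z a := by rw [dist_eq_norm]; simp
    have h2 : ‖w • v‖ ≤ 2 * r * ‖v‖ := by
      rw [norm_smul]
      have hw' : ‖w‖ ≤ 2 * r := by
        simpa [dist_eq_norm] using (mem_ball.mp hw).le
      exact mul_le_mul_of_nonneg_right hw' (norm_nonneg v)
    have h3 : 2 * r * ‖v‖ ≤ t / 2 := by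
      calc 2 * r * ‖v‖ = t * ‖v‖ / (2 * (‖v‖ + 1)) := by rw [hr_def]; field_simp; ring
        _ ≤ t * (‖v‖ + 1) / (2 * (‖v‖ + 1)) := by gcongr; linarith
        _ = t / 2 := by field_simp
    have h4 : dist z a < t / 2 := mem_ball.mp hz
    linarith
  have hdiff : ∀ z ∈ ball a (t / 2),
      DifferentiableOn ℂ (fun w : ℂ => F (z + w • v)) (ball 0 (2 * r)) := by
    intro z hz w hw
    have h1 : DifferentiableAt ℂ F (z + w • v) :=
      hF.differentiableAt (hU.mem_nhds (hmaps z hz w hw))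
    have h2 : DifferentiableAt ℂ (fun w : ℂ => z + w • v) w :=
      ((differentiableAt_id).smul_const v).const_add z
    exact (h1.comp w h2).differentiableWithinAt
  have key : ∀ z ∈ ball a (t / 2),
      fderiv ℂ F z v = Complex.cderiv r (fun w => F (z + w • v)) 0 := by
    intro z hz
    rw [Complex.cderiv_eq_deriv isOpen_ball (hdiff z hz) hr
      (closedBall_subset_ball (by linarith))]
    have hzU : z ∈ U := by simpa using hmaps z hz 0 (mem_ball_self (by positivity))
    have hF' : HasFDerivAt F (fderiv ℂ F z) z :=
      (hF.differentiableAt (hU.mem_nhds hzU)).hasFDerivAt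
    have hline : HasDerivAt (fun w : ℂ => z + w • v) v 0 := by
      simpa using ((hasDerivAt_id (0 : ℂ)).smul_const v).const_add z
    have hF'' : HasFDerivAt F (fderiv ℂ F z) (z + (0:ℂ) • v) := by simpa using hF'
    have hcomp : HasDerivAt (fun w : ℂ => F (z + w • v)) (fderiv ℂ F z v) 0 :=
      hF''.comp_hasDerivAt 0 hline
    exact hcomp.deriv.symm
  have hcompact : IsCompact (closedBall a t) := isCompact_closedBall a t
  have hFc : ContinuousOn F (closedBall a t) := hF.continuousOn.mono htU
  have hunif := hcompact.uniformContinuousOn_of_continuous hFc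
  rw [Metric.uniformContinuousOn_iff] at hunif
  obtain ⟨δ, hδ, hδ'⟩ := hunif (ε * r) (by positivity)
  refine ⟨min δ (t / 2), by positivity, fun {z} hz => ?_⟩
  have hz1 : z ∈ ball a (t / 2) := mem_ball.mpr (lt_of_lt_of_le hz (min_le_right _ _))
  have hzδ : dist z a < δ := lt_of_lt_of_le hz (min_le_left _ _)
  have ha1 : a ∈ ball a (t / 2) := mem_ball_self (by positivity)
  have hin : ∀ z' ∈ ball a (t / 2), ∀ w ∈ sphere (0 : ℂ) r, z' + w • v ∈ closedBall a t := by
    intro z' hz' w hw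
    rw [mem_closedBall]
    have h1 : dist (z' + w • v) a ≤ ‖w • v‖ + dist z' a := by
      calc dist (z' + w • v) a ≤ dist (z' + w • v) z' + dist z' a := dist_triangle _ _ _
      _ = ‖w • v‖ + dist z' a := by rw [dist_eq_norm]; simp
    have hw' : ‖w‖ = r := by simpa [dist_eq_norm] using hw
    have h2 : ‖w • v‖ ≤ 2 * r * ‖v‖ := by
      rw [norm_smul, hw']
      nlinarith [norm_nonneg v, hr.le]
    have h3 : 2 * r * ‖v‖ ≤ t / 2 := by
      calc 2 * r * ‖v‖ = t * ‖v‖ / (2 * (‖v‖ + 1)) := by rw [hr_def]; field_simp; ring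
        _ ≤ t * (‖v‖ + 1) / (2 * (‖v‖ + 1)) := by gcongr; linarith
        _ = t / 2 := by field_simp
    have := mem_ball.mp hz'
    linarith
  have hcontz : ∀ z' ∈ ball a (t / 2),
      ContinuousOn (fun w : ℂ => F (z' + w • v)) (sphere (0 : ℂ) r) := by
    intro z' hz'
    exact ((hdiff z' hz').continuousOn).mono
      ((sphere_subset_closedBall).trans (closedBall_subset_ball (by linarith)))
  rw [dist_eq_norm, key z hz1, key a ha1]
  have hbound : ∀ w ∈ sphere (0 : ℂ) r,
      ‖F (z + w • v) - F (a + w • v)‖ < ε * r := by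
    intro w hw
    rw [← dist_eq_norm]
    apply hδ' _ (hin z hz1 w hw) _ (hin a ha1 w hw)
    simpa [dist_eq_norm, add_sub_add_right_eq_sub] using hzδ
  have := Complex.norm_cderiv_sub_lt hr hbound (hcontz z hz1) (hcontz a ha1)
  calc ‖Complex.cderiv r (fun w => F (z + w • v)) 0 -
      Complex.cderiv r (fun w => F (a + w • v)) 0‖ < ε * r / r := this
  _ = ε := by field_simp

lemma continuousOn_fderiv_cx {n : ℕ} {E : Type*}
    [NormedAddCommGroup E] [NormedSpace ℂ E] [CompleteSpace E]
    {U : Set (Fin n → ℂ)} (hU : IsOpen U) {F : (Fin n → ℂ) → E}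
    (hF : DifferentiableOn ℂ F U) :
    ContinuousOn (fun z => fderiv ℂ F z) U := by
  classical
  have h : (fun z => fderiv ℂ F z) =
      (ContinuousLinearEquiv.piRing (Fin n) (𝕜 := ℂ) (E := E)).symm ∘
        (fun z i => fderiv ℂ F z (Pi.single i 1)) := by
    funext z
    simp only [Function.comp_apply]
    exact (ContinuousLinearEquiv.symm_apply_apply _ _).symm
  rw [h]
  exact (ContinuousLinearEquiv.piRing (Fin n) (𝕜 := ℂ) (E := E)).symm.continuous.comp_continuousOn
    (continuousOn_pi.mpr fun i => continuousOn_fderiv_apply_cx hU hF _)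

lemma inj_of_det_ne_zero' {M : Type*} [AddCommGroup M] [Module ℂ M] [Module.Finite ℂ M]
    {f : M →ₗ[ℂ] M} (h : LinearMap.det f ≠ 0) : Function.Injective f := by
  have tfae := LinearMap.hasEigenvalue_zero_tfae f
  have h65 : ¬ ∃ m, m ≠ 0 ∧ f m = 0 := fun hm => h ((tfae.out 3 5).mpr hm)
  intro x y hxy
  by_contra hne
  exact h65 ⟨x - y, sub_ne_zero.mpr hne, by simp [map_sub, hxy]⟩

lemma two_mul_finrank_ker_le {n k : ℕ} (ρ : Fin k → (Fin n → ℂ) → ℝ) (p : Fin n → ℂ)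
    {E : Type*} [NormedAddCommGroup E] [NormedSpace ℂ E]
    (D : (Fin n → ℂ) →L[ℂ] E)
    (hinj : Set.InjOn D (tSub ρ p : Set (Fin n → ℂ))) :
    2 * Module.finrank ℂ (LinearMap.ker D.toLinearMap) ≤ k := by
  classical
  set Kp : Submodule ℂ (Fin n → ℂ) := LinearMap.ker D.toLinearMap with hKp
  set T : Submodule ℝ (Fin n → ℂ) := tSub ρ p with hT
  have hdisj : Kp.restrictScalars ℝ ⊓ T = ⊥ := by
    rw [eq_bot_iff]
    rintro x hx
    rw [Submodule.mem_inf] at hx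
    have hxK : D x = 0 := hx.1
    have hxT : x ∈ (T : Set (Fin n → ℂ)) := hx.2
    have h0T : (0 : Fin n → ℂ) ∈ (T : Set (Fin n → ℂ)) := T.zero_mem
    have := hinj hxT h0T (by simp [hxK])
    simp [this]
  have hrank2 : Module.finrank ℝ (Kp.restrictScalars ℝ) = 2 * Module.finrank ℂ Kp := by
    have h1 : Module.finrank ℝ (Kp.restrictScalars ℝ) = Module.finrank ℝ Kp :=
      ((Submodule.restrictScalarsEquiv ℝ ℂ (Fin n → ℂ) Kp).restrictScalars ℝ).finrank_eq
    have h2 := Module.finrank_mul_finrank ℝ ℂ ↥Kp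
    rw [Complex.finrank_real_complex] at h2
    omega
  have hVr : Module.finrank ℝ (Fin n → ℂ) = 2 * n := by
    rw [Module.finrank_pi_fintype]
    simp [Complex.finrank_real_complex, Finset.sum_const, mul_comm]
  have hsum := Submodule.finrank_sup_add_finrank_inf_eq (Kp.restrictScalars ℝ) T
  rw [hdisj] at hsum
  simp only [finrank_bot, add_zero] at hsum
  have hsupn : Module.finrank ℝ ↥(Kp.restrictScalars ℝ ⊔ T) ≤ 2 * n := by
    rw [← hVr]; exact Submodule.finrank_le _
  set Φ : (Fin n → ℂ) →ₗ[ℝ] (Fin k → ℝ) :=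
    LinearMap.pi (fun j => (fderiv ℝ (ρ j) p : (Fin n → ℂ) →ₗ[ℝ] ℝ)) with hΦ
  have hTker : T = LinearMap.ker Φ := by
    rw [hΦ, LinearMap.ker_pi, hT]
    rfl
  have hTd := LinearMap.finrank_range_add_finrank_ker Φ
  rw [← hTker, hVr] at hTd
  have hrle : Module.finrank ℝ (LinearMap.range Φ) ≤ k := by
    have := Submodule.finrank_le (LinearMap.range Φ)
    simpa [Module.finrank_fin_fun] using this
  omega

end aux

set_option maxHeartbeats 2000000

/-- For `N ⊆ ℂⁿ` of codimension `2ℓ` or `2ℓ+1` and an equidimensional map `F`, the CR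
singularities of `(F ⊕ 0)(N) ⊆ ℂⁿ × ℂˡ` can be perturbed away. -/
theorem perturb_away_after_adding_dimensions {n k ℓ : ℕ} (hℓ : 1 ≤ ℓ)
    (hk : k = 2 * ℓ ∨ k = 2 * ℓ + 1)
    (U : Set (Fin n → ℂ)) (hU : IsOpen U)
    (ρ : Fin k → (Fin n → ℂ) → ℝ)
    (hρa : ∀ j, AnalyticOn ℝ (ρ j) U)
    (hind : ∀ p ∈ U, LinearIndependent ℂ (fun j => wirt (ρ j) p))
    (N : Set (Fin n → ℂ)) (hN : N = {z | z ∈ U ∧ ∀ j, ρ j z = 0})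
    (hNconn : IsConnected N)
    (F : (Fin n → ℂ) → (Fin n → ℂ)) (hF : DifferentiableOn ℂ F U)
    (hFinj : Set.InjOn F N)
    (hFdinj : ∀ q ∈ N, Set.InjOn (fderiv ℂ F q) (tSub ρ q : Set (Fin n → ℂ)))
    (hgen : ∀ z ∈ U, z ∈ closure {w | w ∈ U ∧
      Module.finrank ℂ (LinearMap.range ((fderiv ℂ F w).toLinearMap)) = n}) :
    ∀ p ∈ N, ∃ W : Set (Fin n → ℂ), IsOpen W ∧ p ∈ W ∧ W ⊆ U ∧
      ∀ ε > (0 : ℝ), ∃ G : (Fin n → ℂ) → (Fin n → ℂ) × (Fin ℓ → ℂ),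
        DifferentiableOn ℂ G W ∧
        (∀ z ∈ W, ‖G z - (F z, (0 : Fin ℓ → ℂ))‖ < ε) ∧
        Set.InjOn G (N ∩ W) ∧
        (∀ q ∈ N ∩ W, Set.InjOn (fderiv ℂ G q) (tSub ρ q : Set (Fin n → ℂ))) ∧
        (∀ q ∈ N ∩ W,
          Module.finrank ℂ (LinearMap.range ((fderiv ℂ G q).toLinearMap)) = n) := by
  classical
  intro p hp
  have hpU : p ∈ U := by rw [hN] at hp; exact hp.1
  -- the kernel of `DF(p)` has complex dimension at most `ℓ`
  set Kp : Submodule ℂ (Fin n → ℂ) := LinearMap.ker (fderiv ℂ F p).toLinearMap with hKp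
  have hdim : 2 * Module.finrank ℂ Kp ≤ k :=
    two_mul_finrank_ker_le ρ p (fderiv ℂ F p) (hFdinj p hp)
  set d : ℕ := Module.finrank ℂ Kp with hd_def
  have hdl : d ≤ ℓ := by omega
  -- a linear map `Lc` injective on `Kp`
  obtain ⟨Kc, hKc⟩ := Submodule.exists_isCompl Kp
  set prj := Kp.linearProjOfIsCompl Kc hKc with hprj
  set eK : ↥Kp ≃ₗ[ℂ] (Fin d → ℂ) := (Module.finBasis ℂ ↥Kp).equivFun with heK
  set emb : (Fin d → ℂ) →ₗ[ℂ] (Fin ℓ → ℂ) :=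
    { toFun := fun x i => if h : (i : ℕ) < d then x ⟨i, h⟩ else 0,
      map_add' := by
        intro x y; funext i; by_cases h : (i : ℕ) < d <;> simp [h]
      map_smul' := by
        intro c x; funext i; by_cases h : (i : ℕ) < d <;> simp [h] } with hemb
  have hembinj : Function.Injective emb := by
    intro x y hxy
    funext j
    have hj : (j : ℕ) < ℓ := lt_of_lt_of_le j.2 hdl
    have h1 := congrFun hxy ⟨j, hj⟩
    simpa [hemb, j.2] using h1
  set Lc : (Fin n → ℂ) →L[ℂ] (Fin ℓ → ℂ) :=
    LinearMap.toContinuousLinearMap (emb ∘ₗ (eK.toLinearMap ∘ₗ prj)) with hLc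
  have hLcK : ∀ x, x ∈ Kp → Lc x = 0 → x = 0 := by
    intro x hx h0
    have hpx : prj x = ⟨x, hx⟩ := Submodule.linearProjOfIsCompl_apply_left hKc ⟨x, hx⟩
    have h1 : emb (eK (prj x)) = 0 := by
      simpa [hLc] using h0
    have h2 : eK (prj x) = 0 := hembinj (h1.trans (map_zero emb).symm)
    have h3 : prj x = 0 := eK.injective (h2.trans (map_zero eK).symm)
    rw [hpx] at h3
    simpa using congrArg Subtype.val h3
  -- the augmented differential and a left inverse at `p`
  set B : (Fin n → ℂ) → ((Fin n → ℂ) →L[ℂ] (Fin n → ℂ) × (Fin ℓ → ℂ)) :=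
    fun q => (fderiv ℂ F q).prod Lc with hB
  have hBpinj : LinearMap.ker ((B p) : (Fin n → ℂ) →ₗ[ℂ] (Fin n → ℂ) × (Fin ℓ → ℂ)) = ⊥ := by
    rw [LinearMap.ker_eq_bot']
    intro v hv
    have h1 : fderiv ℂ F p v = 0 ∧ Lc v = 0 := by
      simpa [hB, ContinuousLinearMap.prod_apply, Prod.ext_iff] using hv
    exact hLcK v (LinearMap.mem_ker.mpr h1.1) h1.2
  obtain ⟨P, hP⟩ := LinearMap.exists_leftInverse_of_injective
    ((B p) : (Fin n → ℂ) →ₗ[ℂ] (Fin n → ℂ) × (Fin ℓ → ℂ)) hBpinj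
  set Pc : ((Fin n → ℂ) × (Fin ℓ → ℂ)) →L[ℂ] (Fin n → ℂ) :=
    LinearMap.toContinuousLinearMap P with hPc
  set C : (Fin n → ℂ) → ((Fin n → ℂ) →L[ℂ] (Fin n → ℂ)) := fun q => Pc.comp (B q) with hC
  have hCp : LinearMap.det ((C p) : (Fin n → ℂ) →ₗ[ℂ] (Fin n → ℂ)) = 1 := by
    have h1 : ((C p) : (Fin n → ℂ) →ₗ[ℂ] (Fin n → ℂ)) = LinearMap.id := by
      apply LinearMap.ext
      intro v
      have h2 := LinearMap.congr_fun hP v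
      simpa [hC, hPc, LinearMap.coe_toContinuousLinearMap'] using h2
    rw [h1, LinearMap.det_id]
  -- continuity of the determinant
  have hcont : ContinuousOn (fun q => LinearMap.det
      ((C q) : (Fin n → ℂ) →ₗ[ℂ] (Fin n → ℂ))) U := by
    have h1 : ContinuousOn (fun q => fderiv ℂ F q) U := continuousOn_fderiv_cx hU hF
    have h2 : ContinuousOn B U := by
      have hBeq : B = fun q =>
          (ContinuousLinearMap.inl ℂ (Fin n → ℂ) (Fin ℓ → ℂ)).comp (fderiv ℂ F q) +
          (ContinuousLinearMap.inr ℂ (Fin n → ℂ) (Fin ℓ → ℂ)).comp Lc := by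
        funext q
        ext v <;> simp [hB]
      rw [hBeq]
      exact (continuousOn_const.clm_comp h1).add continuousOn_const
    have h3 : ContinuousOn C U := continuousOn_const.clm_comp h2
    exact ContinuousLinearMap.continuous_det.comp_continuousOn h3
  -- the neighborhood W
  set W : Set (Fin n → ℂ) := (U ∩ ball p 1) ∩
    ((fun q => LinearMap.det ((C q) : (Fin n → ℂ) →ₗ[ℂ] (Fin n → ℂ))) ⁻¹' {(0:ℂ)}ᶜ) with hW
  have hWopen : IsOpen W :=
    (hcont.mono Set.inter_subset_left).isOpen_inter_preimage (hU.inter isOpen_ball)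
      isOpen_compl_singleton
  have hpW : p ∈ W := by
    refine ⟨⟨hpU, mem_ball_self one_pos⟩, ?_⟩
    simp [hCp]
  have hWU : W ⊆ U := fun q hq => hq.1.1
  have hBinj : ∀ q ∈ W, Function.Injective (B q) := by
    intro q hq
    have hdet : LinearMap.det ((C q) : (Fin n → ℂ) →ₗ[ℂ] (Fin n → ℂ)) ≠ 0 := hq.2
    have hCinj : Function.Injective ((C q) : (Fin n → ℂ) →ₗ[ℂ] (Fin n → ℂ)) :=
      inj_of_det_ne_zero' hdet
    intro x y hxy
    exact hCinj (by simp [hC, hxy])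
  refine ⟨W, hWopen, hpW, hWU, ?_⟩
  intro ε hε
  set R : ℝ := ‖p‖ + 1 with hR
  set Mc : ℝ := ‖Lc‖ * R + 1 with hMc
  have hMcpos : 0 < Mc := by positivity
  set δ : ℝ := ε / Mc with hδdef
  have hδpos : 0 < δ := by positivity
  have hδc : ((δ : ℂ)) ≠ 0 := by
    simpa using hδpos.ne'
  set G : (Fin n → ℂ) → (Fin n → ℂ) × (Fin ℓ → ℂ) :=
    fun z => (F z, ((δ : ℂ) • Lc) z) with hG
  have hGd : ∀ q ∈ W, HasFDerivAt G ((fderiv ℂ F q).prod ((δ : ℂ) • Lc)) q := by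
    intro q hq
    exact HasFDerivAt.prodMk ((hF.differentiableAt (hU.mem_nhds (hWU hq))).hasFDerivAt)
      (((δ : ℂ) • Lc).hasFDerivAt)
  have hGinj : ∀ q ∈ N ∩ W, Function.Injective (fderiv ℂ G q) := by
    rintro q ⟨hqN, hqW⟩
    rw [(hGd q hqW).fderiv]
    intro x y hxy
    rw [Prod.ext_iff] at hxy
    simp only [ContinuousLinearMap.prod_apply, ContinuousLinearMap.smul_apply] at hxy
    have h2 : Lc x = Lc y := smul_right_injective _ hδc hxy.2
    apply hBinj q hqW
    simp only [hB, ContinuousLinearMap.prod_apply]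
    exact Prod.ext hxy.1 h2
  refine ⟨G, ?_, ?_, ?_, ?_, ?_⟩
  · exact fun z hz => ((hGd z hz).differentiableAt).differentiableWithinAt
  · intro z hz
    have h1 : G z - (F z, (0 : Fin ℓ → ℂ)) = (0, (δ : ℂ) • Lc z) := by
      simp [hG, Prod.ext_iff]
    rw [h1]
    have h2 : ‖((0 : Fin n → ℂ), (δ : ℂ) • Lc z)‖ = ‖(δ : ℂ) • Lc z‖ := by
      simp [Prod.norm_def]
    rw [h2, norm_smul]
    have h3 : ‖(δ : ℂ)‖ = δ := by
      simpa using abs_of_pos hδpos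
    rw [h3]
    have h4 : ‖z‖ ≤ R := by
      have := mem_ball.mp hz.1.2
      rw [dist_eq_norm] at this
      calc ‖z‖ = ‖z - p + p‖ := by ring_nf
        _ ≤ ‖z - p‖ + ‖p‖ := norm_add_le _ _
        _ ≤ R := by rw [hR]; linarith
    have h5 : ‖Lc z‖ ≤ ‖Lc‖ * R := le_trans (Lc.le_opNorm z)
      (mul_le_mul_of_nonneg_left h4 (norm_nonneg _))
    calc δ * ‖Lc z‖ ≤ δ * (‖Lc‖ * R) := mul_le_mul_of_nonneg_left h5 hδpos.le
      _ < δ * Mc := by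
        apply mul_lt_mul_of_pos_left _ hδpos
        rw [hMc]; linarith
      _ = ε := by
        rw [hδdef, div_mul_cancel₀]
        exact hMcpos.ne'
  · intro a ha b hb hab
    exact hFinj ha.1 hb.1 (congrArg Prod.fst hab)
  · intro q hq
    exact (hGinj q hq).injOn
  · intro q hq
    have h1 : Function.Injective ((fderiv ℂ G q) :
        (Fin n → ℂ) →ₗ[ℂ] (Fin n → ℂ) × (Fin ℓ → ℂ)) := hGinj q hq
    rw [LinearMap.finrank_range_of_inj h1]
    exact Module.finrank_fin_fun ℂ
end
end

section
/- Let N = {z ∈ ℂ³ : z₁ = conj(z₃)} and define F : ℂ³ → ℂ⁴ by F(z₁, z₂, z₃) = (z₁, z₂, z₃², z₂·z₃). Then for every open neighborhood U of 0 in ℂ³ there exists ε > 0 such that for every holomorphic map G : U → ℂ⁴ with ‖F(z) − G(z)‖ < ε for all z ∈ U, there exists a point q ∈ N ∩ U at which the complex derivative DG(q) has rank strictly less than 3. (Consequently, the CR singularity of the CR image F(N) at 0 cannot be perturbed away.) -/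
open Complex Filter Topology Metric
open scoped ComplexConjugate NNReal

noncomputable section

namespace NonremovableAux

lemma deriv_bound {W : Type*} [NormedAddCommGroup W] [NormedSpace ℂ W] (f : ℂ → W)
    {ρ M : ℝ} (hρ : 0 < ρ) (hM : 0 < M)
    (hd : DifferentiableOn ℂ f (ball (0:ℂ) ρ)) (hb : ∀ t ∈ ball (0:ℂ) ρ, ‖f t‖ ≤ M) :
    ‖deriv f 0‖ ≤ 3 * M / ρ := by
  apply Complex.norm_deriv_le_div_of_mapsTo_ball hd ?_ hρ
  intro t ht
  have h1 := hb t ht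
  have h2 := hb 0 (mem_ball_self hρ)
  rw [mem_closedBall, dist_eq_norm]
  apply le_of_lt
  calc ‖f t - f 0‖ ≤ ‖f t‖ + ‖f 0‖ := norm_sub_le _ _
    _ < 3 * M := by linarith

/-- Derivative of `F`. -/
def DF (z : Fin 3 → ℂ) : (Fin 3 → ℂ) →L[ℂ] (Fin 4 → ℂ) :=
  ContinuousLinearMap.pi
    ![ContinuousLinearMap.proj 0, ContinuousLinearMap.proj 1,
      (2 * z 2) • ContinuousLinearMap.proj 2,
      z 1 • ContinuousLinearMap.proj 2 + z 2 • ContinuousLinearMap.proj 1]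

lemma DF_apply (z v : Fin 3 → ℂ) :
    DF z v = ![v 0, v 1, 2 * z 2 * v 2, z 1 * v 2 + z 2 * v 1] := by
  funext i
  fin_cases i <;>
    simp [DF, ContinuousLinearMap.pi_apply, Matrix.cons_val_zero, Matrix.cons_val_one,
      Matrix.head_cons, smul_eq_mul]

lemma hasFDerivAt_F (z : Fin 3 → ℂ) :
    HasFDerivAt (fun z : Fin 3 → ℂ => ![z 0, z 1, (z 2)^2, z 1 * z 2]) (DF z) z := by
  apply hasFDerivAt_pi''
  intro i
  fin_cases i
  · simpa [DF] using hasFDerivAt_apply (𝕜 := ℂ) (0 : Fin 3) z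
  · simpa [DF] using hasFDerivAt_apply (𝕜 := ℂ) (1 : Fin 3) z
  · have h1 : HasDerivAt (fun w : ℂ => w ^ 2) (2 * z 2) (z 2) := by
      simpa using hasDerivAt_pow 2 (z 2)
    have h2 := h1.comp_hasFDerivAt z (hasFDerivAt_apply (𝕜 := ℂ) (2 : Fin 3) z)
    simpa [DF, Function.comp_def] using h2
  · have h2 := (hasFDerivAt_apply (𝕜 := ℂ) (1 : Fin 3) z).mul
      (hasFDerivAt_apply (𝕜 := ℂ) (2 : Fin 3) z)
    simpa [DF, Pi.mul_def] using h2

lemma norm3_le {a b c : ℂ} {m : ℝ} (ha : ‖a‖ ≤ m) (hb : ‖b‖ ≤ m) (hc : ‖c‖ ≤ m) :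
    ‖(![a, b, c] : Fin 3 → ℂ)‖ ≤ m := by
  have hm : 0 ≤ m := le_trans (norm_nonneg a) ha
  rw [pi_norm_le_iff_of_nonneg hm]
  intro i; fin_cases i <;> simpa

lemma norm4_le {a b c d : ℂ} {m : ℝ} (ha : ‖a‖ ≤ m) (hb : ‖b‖ ≤ m) (hc : ‖c‖ ≤ m)
    (hd : ‖d‖ ≤ m) : ‖(![a, b, c, d] : Fin 4 → ℂ)‖ ≤ m := by
  have hm : 0 ≤ m := le_trans (norm_nonneg a) ha
  rw [pi_norm_le_iff_of_nonneg hm]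
  intro i; fin_cases i <;> simpa

lemma hasDerivAt_slice {H : (Fin 3 → ℂ) → (Fin 4 → ℂ)} {z : Fin 3 → ℂ}
    (hd : DifferentiableAt ℂ H z) (v : Fin 3 → ℂ) :
    HasDerivAt (fun t : ℂ => H (z + t • v)) (fderiv ℂ H z v) 0 := by
  have hline : HasDerivAt (fun t : ℂ => z + t • v) v 0 := by
    simpa using ((hasDerivAt_id' (x := (0:ℂ))).smul_const v).const_add z
  have h2 := HasFDerivAt.comp_hasDerivAt_of_eq (0:ℂ) hd.hasFDerivAt hline (by simp)
  simpa [Function.comp_def] using h2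

end NonremovableAux

open NonremovableAux in
set_option maxHeartbeats 1000000 in
/-- For `N = {z₁ = z̄₃} ⊆ ℂ³` and `F(z) = (z₁, z₂, z₃², z₂z₃)`, the CR singularity of
`F(N)` at `0` cannot be perturbed away: every holomorphic map close enough to `F` has
derivative of rank `< 3` somewhere on `N`. -/
theorem example_nonremovable_singularity
    (N : Set (Fin 3 → ℂ)) (hN : N = {z : Fin 3 → ℂ | z 0 = conj (z 2)})
    (F : (Fin 3 → ℂ) → (Fin 4 → ℂ))
    (hF : ∀ z : Fin 3 → ℂ, F z = ![z 0, z 1, (z 2)^2, z 1 * z 2]) :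
    ∀ U : Set (Fin 3 → ℂ), IsOpen U → (0 : Fin 3 → ℂ) ∈ U →
      ∃ ε > (0 : ℝ), ∀ G : (Fin 3 → ℂ) → (Fin 4 → ℂ), DifferentiableOn ℂ G U →
        (∀ z ∈ U, ‖F z - G z‖ < ε) →
        ∃ q ∈ N ∩ U,
          Module.finrank ℂ (LinearMap.range ((fderiv ℂ G q).toLinearMap)) < 3 := by
  obtain rfl : F = fun z => ![z 0, z 1, (z 2)^2, z 1 * z 2] := funext hF
  subst hN
  intro U hU hU0
  obtain ⟨R₀, hR₀pos, hR₀⟩ := Metric.isOpen_iff.1 hU 0 hU0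
  set R : ℝ := min 1 (R₀ / 2) with hRdef
  have hRpos : 0 < R := lt_min one_pos (by linarith)
  have hR1 : R ≤ 1 := min_le_left _ _
  have hRU : ball (0 : Fin 3 → ℂ) R ⊆ U := by
    refine subset_trans (ball_subset_ball ?_) hR₀
    calc R ≤ R₀ / 2 := min_le_right _ _
      _ ≤ R₀ := by linarith
  set ε : ℝ := R ^ 2 / 600 with hεdef
  have hεpos : 0 < ε := by positivity
  refine ⟨ε, hεpos, ?_⟩
  intro G hG hclose
  set s : ℝ := R / 16 with hsdef
  have hspos : 0 < s := by positivity
  have hsR : s ≤ R / 4 := by rw [hsdef]; linarith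
  have hs1 : s ≤ 1 := by rw [hsdef]; linarith
  -- the perturbation H = G - F
  set H : (Fin 3 → ℂ) → (Fin 4 → ℂ) :=
    fun z => G z - ![z 0, z 1, (z 2)^2, z 1 * z 2] with hHdef
  have hHd : DifferentiableOn ℂ H (ball 0 R) := by
    apply DifferentiableOn.sub (hG.mono hRU)
    exact fun z _ => (hasFDerivAt_F z).differentiableAt.differentiableWithinAt
  have hHdiffAt : ∀ z ∈ ball (0 : Fin 3 → ℂ) R, DifferentiableAt ℂ H z :=
    fun z hz => hHd.differentiableAt (isOpen_ball.mem_nhds hz)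
  have hHb : ∀ z ∈ ball (0 : Fin 3 → ℂ) R, ‖H z‖ ≤ ε := by
    intro z hz
    have h := hclose z (hRU hz)
    rw [hHdef, norm_sub_rev]
    exact le_of_lt h
  -- first Cauchy estimate : bound on the derivative of H
  have hB1 : ∀ z ∈ closedBall (0 : Fin 3 → ℂ) (R/4), ‖fderiv ℂ H z‖ ≤ 6 * ε / R := by
    intro z hz
    rw [mem_closedBall_zero_iff] at hz
    refine ContinuousLinearMap.opNorm_le_bound _ (by positivity) ?_
    intro v
    rcases eq_or_ne v 0 with rfl | hv
    · simp
    have hvpos : 0 < ‖v‖ := norm_pos_iff.2 hv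
    set ρ : ℝ := (R / 2) / ‖v‖ with hρdef
    have hρpos : 0 < ρ := by positivity
    have hmem : ∀ t : ℂ, t ∈ ball (0:ℂ) ρ → z + t • v ∈ ball (0 : Fin 3 → ℂ) R := by
      intro t ht
      rw [mem_ball_zero_iff] at ht ⊢
      have h1 : ‖t‖ * ‖v‖ < ρ * ‖v‖ := mul_lt_mul_of_pos_right ht hvpos
      have h2 : ρ * ‖v‖ = R / 2 := by
        rw [hρdef, div_mul_cancel₀ _ (ne_of_gt hvpos)]
      calc ‖z + t • v‖ ≤ ‖z‖ + ‖t • v‖ := norm_add_le _ _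
        _ = ‖z‖ + ‖t‖ * ‖v‖ := by rw [norm_smul]
        _ < R := by rw [h2] at h1; linarith
    have hgd : DifferentiableOn ℂ (fun t : ℂ => H (z + t • v)) (ball (0:ℂ) ρ) := by
      intro t ht
      have hline : DifferentiableAt ℂ (fun u : ℂ => z + u • v) t :=
        (((hasDerivAt_id' (x := t)).smul_const v).const_add z).differentiableAt
      exact ((hHdiffAt _ (hmem t ht)).comp t hline).differentiableWithinAt
    have hgb : ∀ t ∈ ball (0:ℂ) ρ, ‖H (z + t • v)‖ ≤ ε := fun t ht => hHb _ (hmem t ht)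
    have hzball : z ∈ ball (0 : Fin 3 → ℂ) R := by
      rw [mem_ball_zero_iff]; linarith
    have hD := (hasDerivAt_slice (hHdiffAt z hzball) v).deriv
    have hkey := deriv_bound _ hρpos hεpos hgd hgb
    rw [hD] at hkey
    calc ‖fderiv ℂ H z v‖ ≤ 3 * ε / ρ := hkey
      _ = 6 * ε / R * ‖v‖ := by
          rw [hρdef]; field_simp; ring
  -- H is Lipschitz with small constant
  have hHlip : ∀ p ∈ closedBall (0 : Fin 3 → ℂ) (R/4), ∀ p' ∈ closedBall (0 : Fin 3 → ℂ) (R/4),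
      ‖H p - H p'‖ ≤ 6 * ε / R * ‖p - p'‖ := by
    intro p hp p' hp'
    have hsub : closedBall (0 : Fin 3 → ℂ) (R/4) ⊆ ball 0 R :=
      closedBall_subset_ball (by linarith)
    exact (convex_closedBall _ _).norm_image_sub_le_of_norm_hasFDerivWithin_le
      (f' := fun x => (fderiv ℂ H x).restrictScalars ℝ)
      (fun x hx => ((hHdiffAt x (hsub hx)).hasFDerivAt.restrictScalars ℝ).hasFDerivWithinAt)
      (fun x hx => by
        rw [ContinuousLinearMap.norm_restrictScalars]; exact hB1 x hx) hp' hp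
  -- second Cauchy estimate : the derivative of H has small Lipschitz constant
  have hB3 : ∀ z ∈ closedBall (0 : Fin 3 → ℂ) s, ∀ z' ∈ closedBall (0 : Fin 3 → ℂ) s,
      ∀ v : Fin 3 → ℂ, ‖v‖ ≤ 1 →
      ‖fderiv ℂ H z v - fderiv ℂ H z' v‖ ≤ 144 * ε / R ^ 2 * ‖z - z'‖ := by
    intro z hz z' hz' v hv
    rcases eq_or_ne z z' with rfl | hne
    · simp
    rw [mem_closedBall_zero_iff] at hz hz'
    have hzz' : 0 < ‖z - z'‖ := by rw [norm_pos_iff, sub_ne_zero]; exact hne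
    set M : ℝ := 6 * ε / R * ‖z - z'‖ with hMdef
    have hMpos : 0 < M := by positivity
    have key : ∀ w : Fin 3 → ℂ, ‖w‖ ≤ s → ∀ t ∈ ball (0:ℂ) (R/8),
        w + t • v ∈ closedBall (0 : Fin 3 → ℂ) (R/4) := by
      intro w hw t ht
      rw [mem_ball_zero_iff] at ht
      rw [mem_closedBall_zero_iff]
      have h1 : ‖t‖ * ‖v‖ ≤ (R/8) * 1 :=
        mul_le_mul (le_of_lt ht) hv (norm_nonneg _) (by positivity)
      calc ‖w + t • v‖ ≤ ‖w‖ + ‖t‖ * ‖v‖ := by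
            rw [← norm_smul]; exact norm_add_le _ _
        _ ≤ s + R/8 := by linarith
        _ ≤ R/4 := by rw [hsdef]; linarith
    have hsub : closedBall (0 : Fin 3 → ℂ) (R/4) ⊆ ball 0 R :=
      closedBall_subset_ball (by linarith)
    set d : ℂ → (Fin 4 → ℂ) := fun t => H (z + t • v) - H (z' + t • v) with hddef
    have hdd : DifferentiableOn ℂ d (ball (0:ℂ) (R/8)) := by
      intro t ht
      have hline : DifferentiableAt ℂ (fun u : ℂ => z + u • v) t :=
        (((hasDerivAt_id' (x := t)).smul_const v).const_add z).differentiableAt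
      have hline' : DifferentiableAt ℂ (fun u : ℂ => z' + u • v) t :=
        (((hasDerivAt_id' (x := t)).smul_const v).const_add z').differentiableAt
      have h1 := (hHdiffAt _ (hsub (key z hz t ht))).comp t hline
      have h2 := (hHdiffAt _ (hsub (key z' hz' t ht))).comp t hline'
      exact (h1.sub h2).differentiableWithinAt
    have hdb : ∀ t ∈ ball (0:ℂ) (R/8), ‖d t‖ ≤ M := by
      intro t ht
      have h := hHlip _ (key z hz t ht) _ (key z' hz' t ht)
      have harg : z + t • v - (z' + t • v) = z - z' := by abel
      rw [harg] at h
      exact h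
    have hzb : z ∈ ball (0 : Fin 3 → ℂ) R := by
      rw [mem_ball_zero_iff]
      calc ‖z‖ ≤ s := hz
        _ < R := by rw [hsdef]; linarith
    have hz'b : z' ∈ ball (0 : Fin 3 → ℂ) R := by
      rw [mem_ball_zero_iff]
      calc ‖z'‖ ≤ s := hz'
        _ < R := by rw [hsdef]; linarith
    have hD : deriv d 0 = fderiv ℂ H z v - fderiv ℂ H z' v := by
      have h1 := hasDerivAt_slice (hHdiffAt z hzb) v
      have h2 := hasDerivAt_slice (hHdiffAt z' hz'b) v
      exact (h1.sub h2).deriv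
    have hkey := deriv_bound d (by positivity : (0:ℝ) < R/8) hMpos hdd hdb
    rw [hD] at hkey
    calc ‖fderiv ℂ H z v - fderiv ℂ H z' v‖ ≤ 3 * M / (R/8) := hkey
      _ = 144 * ε / R ^ 2 * ‖z - z'‖ := by
          rw [hMdef]; field_simp; ring
  -- the fixed point setup in ℂ⁴
  set qq : (Fin 4 → ℂ) → (Fin 3 → ℂ) := fun x => ![conj (x 3), x 2, x 3] with hqq
  set vv : (Fin 4 → ℂ) → (Fin 3 → ℂ) := fun x => ![x 0, x 1, 1] with hvv
  set EE : (Fin 4 → ℂ) → (Fin 4 → ℂ) :=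
    fun x => fderiv ℂ G (qq x) (vv x) - ![x 0, x 1, 2 * x 3, x 2] with hEE
  set TT : (Fin 4 → ℂ) → (Fin 4 → ℂ) :=
    fun x => ![-(EE x 0), -(EE x 1), -(EE x 3), -(EE x 2) / 2] with hTT
  have hqnorm : ∀ x : Fin 4 → ℂ, ‖qq x‖ ≤ ‖x‖ := by
    intro x
    rw [hqq]
    refine norm3_le ?_ ?_ ?_
    · rw [RCLike.norm_conj]; exact norm_le_pi_norm x 3
    · exact norm_le_pi_norm x 2
    · exact norm_le_pi_norm x 3
  have hqsub : ∀ x y : Fin 4 → ℂ, ‖qq x - qq y‖ ≤ ‖x - y‖ := by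
    intro x y
    have h : qq x - qq y = ![conj (x 3 - y 3), x 2 - y 2, x 3 - y 3] := by
      funext i; fin_cases i <;> simp [hqq, map_sub]
    rw [h]
    refine norm3_le ?_ ?_ ?_
    · rw [RCLike.norm_conj]
      simpa using norm_le_pi_norm (x - y) 3
    · simpa using norm_le_pi_norm (x - y) 2
    · simpa using norm_le_pi_norm (x - y) 3
  have hvsub : ∀ x y : Fin 4 → ℂ, ‖vv x - vv y‖ ≤ ‖x - y‖ := by
    intro x y
    have h : vv x - vv y = ![x 0 - y 0, x 1 - y 1, 0] := by
      funext i; fin_cases i <;> simp [hvv]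
    rw [h]
    refine norm3_le ?_ ?_ (by simp)
    · simpa using norm_le_pi_norm (x - y) 0
    · simpa using norm_le_pi_norm (x - y) 1
  have hv1 : ∀ x ∈ closedBall (0 : Fin 4 → ℂ) s, ‖vv x‖ ≤ 1 := by
    intro x hx
    rw [mem_closedBall_zero_iff] at hx
    rw [hvv]
    refine norm3_le ?_ ?_ (by simp)
    · exact le_trans (le_trans (norm_le_pi_norm x 0) hx) hs1
    · exact le_trans (le_trans (norm_le_pi_norm x 1) hx) hs1
  have hqmem : ∀ x ∈ closedBall (0 : Fin 4 → ℂ) s, qq x ∈ closedBall (0 : Fin 3 → ℂ) s := by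
    intro x hx
    rw [mem_closedBall_zero_iff] at hx ⊢
    exact le_trans (hqnorm x) hx
  have hqmem4 : ∀ x ∈ closedBall (0 : Fin 4 → ℂ) s, qq x ∈ closedBall (0 : Fin 3 → ℂ) (R/4) :=
    fun x hx => closedBall_subset_closedBall hsR (hqmem x hx)
  have hqball : ∀ x ∈ closedBall (0 : Fin 4 → ℂ) s, qq x ∈ ball (0 : Fin 3 → ℂ) R := by
    intro x hx
    exact closedBall_subset_ball (by rw [hsdef]; linarith) (hqmem x hx)
  -- the key identity for EE
  have hEeq : ∀ x ∈ closedBall (0 : Fin 4 → ℂ) s,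
      EE x = fderiv ℂ H (qq x) (vv x) + ![0, 0, 0, x 3 * x 1] := by
    intro x hx
    have hqU : qq x ∈ ball (0 : Fin 3 → ℂ) R := hqball x hx
    have hGd : DifferentiableAt ℂ G (qq x) :=
      (hG.mono hRU).differentiableAt (isOpen_ball.mem_nhds hqU)
    have hFd := hasFDerivAt_F (qq x)
    have hsplit : fderiv ℂ H (qq x) = fderiv ℂ G (qq x) - DF (qq x) := by
      rw [hHdef, fderiv_fun_sub hGd hFd.differentiableAt, hFd.fderiv]
    have hsplit' : fderiv ℂ G (qq x) (vv x)
        = fderiv ℂ H (qq x) (vv x) + DF (qq x) (vv x) := by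
      rw [hsplit, ContinuousLinearMap.sub_apply]
      abel
    have hDFv : DF (qq x) (vv x) = ![x 0, x 1, 2 * x 3, x 2 + x 3 * x 1] := by
      rw [DF_apply]
      funext i; fin_cases i <;> simp [hqq, hvv] <;> ring
    rw [hEE]
    simp only
    have hvec : (![x 0, x 1, 2 * x 3, x 2 + x 3 * x 1] : Fin 4 → ℂ)
        - ![x 0, x 1, 2 * x 3, x 2] = ![0, 0, 0, x 3 * x 1] := by
      funext i; fin_cases i <;> simp
    rw [hsplit', hDFv, add_sub_assoc, hvec]
  -- sup bound for EE
  have hcoef1 : 6 * ε / R = R / 100 := by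
    rw [hεdef]; field_simp; ring
  have hcoef2 : 144 * ε / R ^ 2 = 24 / 100 := by
    rw [hεdef]; field_simp; ring
  have hEb : ∀ x ∈ closedBall (0 : Fin 4 → ℂ) s, ‖EE x‖ ≤ s := by
    intro x hx
    have hxn : ‖x‖ ≤ s := mem_closedBall_zero_iff.1 hx
    rw [hEeq x hx]
    have h1 : ‖fderiv ℂ H (qq x) (vv x)‖ ≤ 6 * ε / R := by
      calc ‖fderiv ℂ H (qq x) (vv x)‖ ≤ ‖fderiv ℂ H (qq x)‖ * ‖vv x‖ :=
            ContinuousLinearMap.le_opNorm _ _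
        _ ≤ (6 * ε / R) * 1 :=
            mul_le_mul (hB1 _ (hqmem4 x hx)) (hv1 x hx) (norm_nonneg _) (by positivity)
        _ = 6 * ε / R := mul_one _
    have h2 : ‖(![0, 0, 0, x 3 * x 1] : Fin 4 → ℂ)‖ ≤ s * s := by
      refine norm4_le (by rw [norm_zero]; positivity) (by rw [norm_zero]; positivity) (by rw [norm_zero]; positivity) ?_
      rw [norm_mul]
      exact mul_le_mul (le_trans (norm_le_pi_norm x 3) hxn)
        (le_trans (norm_le_pi_norm x 1) hxn) (norm_nonneg _) hspos.le
    calc ‖fderiv ℂ H (qq x) (vv x) + ![0, 0, 0, x 3 * x 1]‖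
        ≤ ‖fderiv ℂ H (qq x) (vv x)‖ + ‖(![0, 0, 0, x 3 * x 1] : Fin 4 → ℂ)‖ := norm_add_le _ _
      _ ≤ 6 * ε / R + s * s := by linarith
      _ ≤ s := by
          rw [hcoef1, hsdef]
          nlinarith
  -- Lipschitz bound for EE
  have hElip : ∀ x ∈ closedBall (0 : Fin 4 → ℂ) s, ∀ y ∈ closedBall (0 : Fin 4 → ℂ) s,
      ‖EE x - EE y‖ ≤ 1/2 * ‖x - y‖ := by
    intro x hx y hy
    have hxn : ‖x‖ ≤ s := mem_closedBall_zero_iff.1 hx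
    have hyn : ‖y‖ ≤ s := mem_closedBall_zero_iff.1 hy
    rw [hEeq x hx, hEeq y hy]
    have hiden : fderiv ℂ H (qq x) (vv x) + ![0, 0, 0, x 3 * x 1]
        - (fderiv ℂ H (qq y) (vv y) + ![0, 0, 0, y 3 * y 1])
        = (fderiv ℂ H (qq x) (vv x) - fderiv ℂ H (qq y) (vv x))
          + (fderiv ℂ H (qq y) (vv x) - fderiv ℂ H (qq y) (vv y))
          + (![0, 0, 0, x 3 * x 1] - ![0, 0, 0, y 3 * y 1]) := by abel
    rw [hiden]
    have h1 : ‖fderiv ℂ H (qq x) (vv x) - fderiv ℂ H (qq y) (vv x)‖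
        ≤ 24/100 * ‖x - y‖ := by
      calc ‖fderiv ℂ H (qq x) (vv x) - fderiv ℂ H (qq y) (vv x)‖
          ≤ 144 * ε / R ^ 2 * ‖qq x - qq y‖ :=
            hB3 _ (hqmem x hx) _ (hqmem y hy) _ (hv1 x hx)
        _ ≤ 144 * ε / R ^ 2 * ‖x - y‖ := by
            rw [hcoef2]
            exact mul_le_mul_of_nonneg_left (hqsub x y) (by norm_num)
        _ = 24/100 * ‖x - y‖ := by rw [hcoef2]
    have h2 : ‖fderiv ℂ H (qq y) (vv x) - fderiv ℂ H (qq y) (vv y)‖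
        ≤ R/100 * ‖x - y‖ := by
      rw [← map_sub]
      calc ‖fderiv ℂ H (qq y) (vv x - vv y)‖ ≤ ‖fderiv ℂ H (qq y)‖ * ‖vv x - vv y‖ :=
            ContinuousLinearMap.le_opNorm _ _
        _ ≤ (6 * ε / R) * ‖x - y‖ := by
            refine mul_le_mul (hB1 _ (hqmem4 y hy)) (hvsub x y) (norm_nonneg _) (by positivity)
        _ = R/100 * ‖x - y‖ := by rw [hcoef1]
    have h3 : ‖(![0, 0, 0, x 3 * x 1] : Fin 4 → ℂ) - ![0, 0, 0, y 3 * y 1]‖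
        ≤ 2 * s * ‖x - y‖ := by
      have hsub3 : (![0, 0, 0, x 3 * x 1] : Fin 4 → ℂ) - ![0, 0, 0, y 3 * y 1]
          = ![0, 0, 0, x 3 * x 1 - y 3 * y 1] := by
        funext i; fin_cases i <;> simp
      rw [hsub3]
      refine norm4_le (by rw [norm_zero]; positivity) (by rw [norm_zero]; positivity) (by rw [norm_zero]; positivity) ?_
      have hfac : x 3 * x 1 - y 3 * y 1 = x 3 * (x 1 - y 1) + (x 3 - y 3) * y 1 := by ring
      rw [hfac]
      have ha : ‖x 3 * (x 1 - y 1)‖ ≤ s * ‖x - y‖ := by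
        rw [norm_mul]
        refine mul_le_mul (le_trans (norm_le_pi_norm x 3) hxn) ?_ (norm_nonneg _) hspos.le
        simpa using norm_le_pi_norm (x - y) 1
      have hb : ‖(x 3 - y 3) * y 1‖ ≤ ‖x - y‖ * s := by
        rw [norm_mul]
        refine mul_le_mul ?_ (le_trans (norm_le_pi_norm y 1) hyn) (norm_nonneg _)
          (norm_nonneg _)
        simpa using norm_le_pi_norm (x - y) 3
      calc ‖x 3 * (x 1 - y 1) + (x 3 - y 3) * y 1‖
          ≤ ‖x 3 * (x 1 - y 1)‖ + ‖(x 3 - y 3) * y 1‖ := norm_add_le _ _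
        _ ≤ 2 * s * ‖x - y‖ := by nlinarith [norm_nonneg (x - y)]
    have hs18 : 2 * s ≤ 1/8 := by rw [hsdef]; linarith
    calc ‖(fderiv ℂ H (qq x) (vv x) - fderiv ℂ H (qq y) (vv x))
          + (fderiv ℂ H (qq y) (vv x) - fderiv ℂ H (qq y) (vv y))
          + (![0, 0, 0, x 3 * x 1] - ![0, 0, 0, y 3 * y 1])‖
        ≤ ‖(fderiv ℂ H (qq x) (vv x) - fderiv ℂ H (qq y) (vv x))
          + (fderiv ℂ H (qq y) (vv x) - fderiv ℂ H (qq y) (vv y))‖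
          + ‖(![0, 0, 0, x 3 * x 1] : Fin 4 → ℂ) - ![0, 0, 0, y 3 * y 1]‖ := norm_add_le _ _
      _ ≤ ‖fderiv ℂ H (qq x) (vv x) - fderiv ℂ H (qq y) (vv x)‖
          + ‖fderiv ℂ H (qq y) (vv x) - fderiv ℂ H (qq y) (vv y)‖
          + ‖(![0, 0, 0, x 3 * x 1] : Fin 4 → ℂ) - ![0, 0, 0, y 3 * y 1]‖ := by
            have := norm_add_le (fderiv ℂ H (qq x) (vv x) - fderiv ℂ H (qq y) (vv x))
              (fderiv ℂ H (qq y) (vv x) - fderiv ℂ H (qq y) (vv y))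
            linarith
      _ ≤ 24/100 * ‖x - y‖ + R/100 * ‖x - y‖ + 2 * s * ‖x - y‖ := by linarith
      _ ≤ 1/2 * ‖x - y‖ := by
          have hR100 : R/100 ≤ 1/100 := by linarith
          nlinarith [norm_nonneg (x - y)]
  -- TT maps the closed ball into itself and is a contraction
  have hTmem : Set.MapsTo TT (closedBall (0 : Fin 4 → ℂ) s) (closedBall (0 : Fin 4 → ℂ) s) := by
    intro x hx
    rw [mem_closedBall_zero_iff]
    have hEx := hEb x hx
    rw [hTT]
    refine norm4_le ?_ ?_ ?_ ?_
    · rw [norm_neg]; exact le_trans (norm_le_pi_norm (EE x) 0) hEx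
    · rw [norm_neg]; exact le_trans (norm_le_pi_norm (EE x) 1) hEx
    · rw [norm_neg]; exact le_trans (norm_le_pi_norm (EE x) 3) hEx
    · rw [norm_div, norm_neg]
      have := le_trans (norm_le_pi_norm (EE x) 2) hEx
      have h2 : ‖(2:ℂ)‖ = 2 := by norm_num
      rw [h2]
      linarith
  have hTlip : LipschitzOnWith (1/2 : ℝ≥0) TT (closedBall (0 : Fin 4 → ℂ) s) := by
    apply LipschitzOnWith.of_dist_le_mul
    intro x hx y hy
    rw [dist_eq_norm, dist_eq_norm]
    have hTsub : TT x - TT y = ![-(EE x 0 - EE y 0), -(EE x 1 - EE y 1),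
        -(EE x 3 - EE y 3), -(EE x 2 - EE y 2) / 2] := by
      funext i; fin_cases i <;> simp [hTT] <;> ring
    rw [hTsub]
    have hE := hElip x hx y hy
    have hbound : ‖(![-(EE x 0 - EE y 0), -(EE x 1 - EE y 1),
        -(EE x 3 - EE y 3), -(EE x 2 - EE y 2) / 2] : Fin 4 → ℂ)‖ ≤ ‖EE x - EE y‖ := by
      refine norm4_le ?_ ?_ ?_ ?_
      · rw [norm_neg]; simpa using norm_le_pi_norm (EE x - EE y) 0
      · rw [norm_neg]; simpa using norm_le_pi_norm (EE x - EE y) 1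
      · rw [norm_neg]; simpa using norm_le_pi_norm (EE x - EE y) 3
      · rw [norm_div, norm_neg]
        have h2 : ‖(2:ℂ)‖ = 2 := by norm_num
        rw [h2]
        have := norm_le_pi_norm (EE x - EE y) 2
        have hnn := norm_nonneg (EE x - EE y)
        simp only [Pi.sub_apply] at this
        linarith
    have hco : ((1/2 : ℝ≥0) : ℝ) = 1/2 := by norm_num
    rw [hco]
    linarith
  have hcontr : ContractingWith (1/2 : ℝ≥0) (hTmem.restrict TT _ _) :=
    ⟨by exact_mod_cast (by norm_num : (1/2 : ℝ) < 1), hTlip.mapsToRestrict hTmem⟩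
  obtain ⟨y, hymem, hyfix, -⟩ := ContractingWith.exists_fixedPoint'
    isClosed_closedBall.isComplete hTmem hcontr (mem_closedBall_self hspos.le) (edist_ne_top _ _)
  -- extract the equations from the fixed point
  have hy0 : -(EE y 0) = y 0 := by
    have := congrFun hyfix 0
    simpa [hTT] using this
  have hy1 : -(EE y 1) = y 1 := by
    have := congrFun hyfix 1
    simpa [hTT] using this
  have hy2 : -(EE y 3) = y 2 := by
    have := congrFun hyfix 2
    simpa [hTT] using this
  have hy3 : -(EE y 2) / 2 = y 3 := by
    have := congrFun hyfix 3
    simpa [hTT] using this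
  have hΦ : fderiv ℂ G (qq y) (vv y) = 0 := by
    have hsum : fderiv ℂ G (qq y) (vv y) = EE y + ![y 0, y 1, 2 * y 3, y 2] := by
      simp only [hEE]; abel
    rw [hsum]
    funext i
    fin_cases i
    · show EE y 0 + y 0 = 0
      rw [← hy0]; ring
    · show EE y 1 + y 1 = 0
      rw [← hy1]; ring
    · show EE y 2 + 2 * y 3 = 0
      rw [← hy3]; ring
    · show EE y 3 + y 2 = 0
      rw [← hy2]; ring
  refine ⟨qq y, ⟨?_, ?_⟩, ?_⟩
  · show qq y 0 = conj (qq y 2)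
    simp [hqq]
  · exact hRU (hqball y hymem)
  · -- rank < 3
    set D := (fderiv ℂ G (qq y)).toLinearMap with hD
    have hker : vv y ∈ LinearMap.ker D := by
      rw [LinearMap.mem_ker]
      exact hΦ
    have hvne : vv y ≠ 0 := by
      intro h
      have := congrFun h 2
      simp [hvv] at this
    have hrank : Module.finrank ℂ (LinearMap.range D) + Module.finrank ℂ (LinearMap.ker D)
        = 3 := by
      rw [LinearMap.finrank_range_add_finrank_ker D, Module.finrank_fin_fun]
    have hkpos : Module.finrank ℂ (LinearMap.ker D) ≠ 0 := by
      intro h0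
      rw [Submodule.finrank_eq_zero] at h0
      rw [h0] at hker
      exact hvne ((Submodule.mem_bot ℂ).1 hker)
    omega
end
end

section
/- Let M₁ = {(z₁, z₂, w) ∈ ℂ³ : w = conj(z₁)·z₂} and M₂ = {(z₁, z₂, w) ∈ ℂ³ : w = conj(z₁)·z₂ + conj(z₁)³}. Then there is no holomorphic map H defined on an open neighborhood Ω of 0 in ℂ³ with values in ℂ³ such that H(0) = 0, the complex derivative DH(0) is invertible, and H(M₂ ∩ Ω) ⊆ M₁. In particular, M₂ is not locally biholomorphically equivalent to M₁ at 0 (even though both have the same quadratic part conj(z₁)·z₂). -/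
open Complex Filter Topology Metric Asymptotics
open scoped ComplexConjugate

noncomputable section

/-- Auxiliary: transfer of frequently-zero from the real axis to `𝓝[≠] 0` in `ℂ`. -/
theorem aux_freq_real {g : ℂ → ℂ} {ε : ℝ} (hε : 0 < ε)
    (h : ∀ t : ℝ, |t| < ε → g (t : ℂ) = 0) : ∃ᶠ z in 𝓝[≠] (0 : ℂ), g z = 0 := by
  have hk : Tendsto (fun t : ℝ => (t : ℂ)) (𝓝[≠] (0:ℝ)) (𝓝[≠] (0:ℂ)) := by
    rw [tendsto_nhdsWithin_iff]
    constructor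
    · exact (Complex.continuous_ofReal.tendsto 0).mono_left nhdsWithin_le_nhds
    · filter_upwards [self_mem_nhdsWithin] with t ht
      simpa [Complex.ofReal_eq_zero] using ht
  apply hk.frequently
  have hev : ∀ᶠ (t : ℝ) in 𝓝[≠] (0:ℝ), g (t : ℂ) = 0 := by
    have h1 : ∀ᶠ (t : ℝ) in 𝓝 (0:ℝ), |t| < ε := by
      filter_upwards [Metric.ball_mem_nhds (0:ℝ) hε] with t ht
      simpa [Real.dist_eq] using ht
    filter_upwards [Filter.Eventually.filter_mono nhdsWithin_le_nhds h1] with t ht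
    exact h t ht
  exact hev.frequently

theorem aux_norm_half_le {u w : ℂ} : ‖(u + Complex.I * w) / 2‖ ≤ (‖u‖ + ‖w‖) / 2 := by
  rw [norm_div, Complex.norm_ofNat]
  have h : ‖u + Complex.I * w‖ ≤ ‖u‖ + ‖w‖ := by
    calc ‖u + Complex.I * w‖ ≤ ‖u‖ + ‖Complex.I * w‖ := norm_add_le _ _
      _ = ‖u‖ + ‖w‖ := by rw [norm_mul, Complex.norm_I, one_mul]
  linarith

theorem aux_norm_half_le' {u w : ℂ} : ‖(u - Complex.I * w) / 2‖ ≤ (‖u‖ + ‖w‖) / 2 := by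
  rw [norm_div, Complex.norm_ofNat]
  have h : ‖u - Complex.I * w‖ ≤ ‖u‖ + ‖w‖ := by
    calc ‖u - Complex.I * w‖ ≤ ‖u‖ + ‖Complex.I * w‖ := norm_sub_le _ _
      _ = ‖u‖ + ‖w‖ := by rw [norm_mul, Complex.norm_I, one_mul]
  linarith

/-- Auxiliary: if `G` is ℂ-differentiable at the conjugated point, then
`p ↦ conj (G (conj p.1, conj p.2))` is ℂ-differentiable at `q`. -/
theorem aux_diffAt_conj_conj {G : ℂ × ℂ → ℂ} {q : ℂ × ℂ}
    (hG : DifferentiableAt ℂ G (conj q.1, conj q.2)) :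
    DifferentiableAt ℂ (fun p : ℂ × ℂ => conj (G (conj p.1, conj p.2))) q := by
  set c : ℂ × ℂ → ℂ × ℂ := fun p => (conj p.1, conj p.2) with hc
  set L := fderiv ℂ G (c q) with hLdef
  have h0 : HasFDerivAt G L (c q) := hG.hasFDerivAt
  set a := L (1, 0) with ha
  set b := L (0, 1) with hb
  have hLapp : ∀ v : ℂ × ℂ, L v = a * v.1 + b * v.2 := by
    intro v
    have hv : v = v.1 • ((1:ℂ), (0:ℂ)) + v.2 • ((0:ℂ), (1:ℂ)) := by
      ext <;> simp
    rw [hv, map_add, map_smul, map_smul]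
    simp [smul_eq_mul, mul_comm, ha, hb]
  set M : ℂ × ℂ →L[ℂ] ℂ :=
    conj a • (ContinuousLinearMap.fst ℂ ℂ ℂ) + conj b • (ContinuousLinearMap.snd ℂ ℂ ℂ) with hM
  have hMapp : ∀ v : ℂ × ℂ, M v = conj a * v.1 + conj b * v.2 := by
    intro v; simp [hM, smul_eq_mul]
  have hcc : Continuous c := by
    apply Continuous.prodMk
    · exact Complex.continuous_conj.comp continuous_fst
    · exact Complex.continuous_conj.comp continuous_snd
  have hc0 : c 0 = 0 := by simp [hc]
  have hct : Tendsto c (𝓝 (0 : ℂ × ℂ)) (𝓝 (0 : ℂ × ℂ)) := by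
    simpa [hc0] using hcc.tendsto 0
  have h1 := (hasFDerivAt_iff_isLittleO_nhds_zero.mp h0).comp_tendsto hct
  have hnormc : ∀ h : ℂ × ℂ, ‖c h‖ = ‖h‖ := by
    intro h; simp [hc, Prod.norm_def]
  have key : HasFDerivAt (fun p : ℂ × ℂ => conj (G (conj p.1, conj p.2))) M q := by
    rw [hasFDerivAt_iff_isLittleO_nhds_zero]
    rw [isLittleO_iff] at h1 ⊢
    intro ε hε
    filter_upwards [h1 hε] with h hh
    have e1 : conj (G (conj (q + h).1, conj (q + h).2)) - conj (G (conj q.1, conj q.2)) - M h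
        = conj (G (c q + c h) - G (c q) - L (c h)) := by
      have e2 : (conj (q + h).1, conj (q + h).2) = c q + c h := by
        simp [hc, Prod.ext_iff]
      rw [e2, map_sub, map_sub, hLapp, hMapp]
      simp [hc]
    calc ‖conj (G (conj (q + h).1, conj (q + h).2)) - conj (G (conj q.1, conj q.2)) - M h‖
        = ‖G (c q + c h) - G (c q) - L (c h)‖ := by rw [e1, RCLike.norm_conj]
      _ ≤ ε * ‖c h‖ := by simpa using hh
      _ = ε * ‖h‖ := by rw [hnormc]
  exact key.differentiableAt

/-- Auxiliary complexification lemma: a holomorphic function of two variables vanishing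
on the conjugate-diagonal vanishes identically near `0`. -/
theorem aux_vanish_complexification {Φ : ℂ × ℂ → ℂ} {ε : ℝ} (hε : 0 < ε)
    (hΦ : DifferentiableOn ℂ Φ (Metric.ball 0 ε))
    (hv : ∀ z : ℂ, ‖z‖ < ε → Φ (z, conj z) = 0) :
    ∀ q : ℂ × ℂ, ‖q.1‖ < ε / 2 → ‖q.2‖ < ε / 2 → Φ q = 0 := by
  set T : ℂ → ℂ → ℂ × ℂ := fun u v => ((u + Complex.I * v) / 2, (u - Complex.I * v) / 2) with hT
  have hTball : ∀ u v : ℂ, ‖u‖ < ε → ‖v‖ < ε → T u v ∈ Metric.ball (0 : ℂ × ℂ) ε := by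
    intro u v hu hv'
    rw [Metric.mem_ball, dist_zero_right, Prod.norm_def]
    have h1 : ‖(u + Complex.I * v) / 2‖ < ε := lt_of_le_of_lt aux_norm_half_le (by linarith)
    have h2 : ‖(u - Complex.I * v) / 2‖ < ε := lt_of_le_of_lt aux_norm_half_le' (by linarith)
    exact max_lt h1 h2
  have hdiffslice1 : ∀ u : ℂ, ‖u‖ < ε →
      AnalyticOnNhd ℂ (fun v => Φ (T u v)) (Metric.ball (0:ℂ) ε) := by
    intro u hu
    apply DifferentiableOn.analyticOnNhd _ Metric.isOpen_ball
    intro v hv'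
    rw [Metric.mem_ball, dist_zero_right] at hv'
    have hΦd : DifferentiableAt ℂ Φ (T u v) :=
      hΦ.differentiableAt (Metric.isOpen_ball.mem_nhds (hTball u v hu hv'))
    have hTd : DifferentiableAt ℂ (fun v => T u v) v := by
      apply DifferentiableAt.prodMk <;> fun_prop
    exact (hΦd.comp v hTd).differentiableWithinAt
  have hdiffslice2 : ∀ v : ℂ, ‖v‖ < ε →
      AnalyticOnNhd ℂ (fun u => Φ (T u v)) (Metric.ball (0:ℂ) ε) := by
    intro v hv'
    apply DifferentiableOn.analyticOnNhd _ Metric.isOpen_ball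
    intro u hu
    rw [Metric.mem_ball, dist_zero_right] at hu
    have hΦd : DifferentiableAt ℂ Φ (T u v) :=
      hΦ.differentiableAt (Metric.isOpen_ball.mem_nhds (hTball u v hu hv'))
    have hTd : DifferentiableAt ℂ (fun u => T u v) u := by
      apply DifferentiableAt.prodMk <;> fun_prop
    exact (hΦd.comp u hTd).differentiableWithinAt
  have step1 : ∀ t : ℝ, |t| < ε → ∀ v : ℂ, ‖v‖ < ε → Φ (T (t:ℂ) v) = 0 := by
    intro t ht
    have htc : ‖(t:ℂ)‖ < ε := by simpa using ht
    have hfreq : ∃ᶠ v in 𝓝[≠] (0:ℂ), Φ (T (t:ℂ) v) = 0 := by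
      apply aux_freq_real hε
      intro s hs
      have hconj : conj (((t:ℂ) + Complex.I * (s:ℂ)) / 2) = ((t:ℂ) - Complex.I * (s:ℂ)) / 2 := by
        simp only [map_div₀, map_add, map_sub, map_mul, Complex.conj_ofReal, Complex.conj_I,
          map_ofNat]
        ring
      have hz : T (t:ℂ) (s:ℂ)
          = ((((t:ℂ) + Complex.I * (s:ℂ)) / 2), conj ((((t:ℂ) + Complex.I * (s:ℂ)) / 2))) := by
        rw [hconj]
      rw [hz]
      apply hv
      refine lt_of_le_of_lt aux_norm_half_le ?_
      simp only [Complex.norm_real, Real.norm_eq_abs]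
      linarith
    have heq := (hdiffslice1 (t:ℂ) htc).eqOn_zero_of_preconnected_of_frequently_eq_zero
      (convex_ball (0:ℂ) ε).isPreconnected (Metric.mem_ball_self hε) hfreq
    intro v hv'
    exact heq (by rwa [Metric.mem_ball, dist_zero_right])
  have step2 : ∀ v : ℂ, ‖v‖ < ε → ∀ u : ℂ, ‖u‖ < ε → Φ (T u v) = 0 := by
    intro v hv'
    have hfreq : ∃ᶠ u in 𝓝[≠] (0:ℂ), Φ (T u v) = 0 := by
      apply aux_freq_real hε
      intro t ht
      exact step1 t ht v hv'
    have heq := (hdiffslice2 v hv').eqOn_zero_of_preconnected_of_frequently_eq_zero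
      (convex_ball (0:ℂ) ε).isPreconnected (Metric.mem_ball_self hε) hfreq
    intro u hu
    exact heq (by rwa [Metric.mem_ball, dist_zero_right])
  intro q hq1 hq2
  have hTq : T (q.1 + q.2) (-Complex.I * (q.1 - q.2)) = q := by
    have hI : Complex.I * Complex.I = -1 := Complex.I_mul_I
    simp only [hT]
    have e1 : (q.1 + q.2 + Complex.I * (-Complex.I * (q.1 - q.2))) / 2 = q.1 := by
      field_simp
      linear_combination (q.2 - q.1) * hI
    have e2 : (q.1 + q.2 - Complex.I * (-Complex.I * (q.1 - q.2))) / 2 = q.2 := by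
      field_simp
      linear_combination (q.1 - q.2) * hI
    rw [e1, e2]
  have h1 : ‖q.1 + q.2‖ < ε := lt_of_le_of_lt (norm_add_le _ _) (by linarith)
  have h2 : ‖-Complex.I * (q.1 - q.2)‖ < ε := by
    rw [norm_mul, norm_neg, Complex.norm_I, one_mul]
    exact lt_of_le_of_lt (norm_sub_le _ _) (by linarith)
  have hfin := step2 (-Complex.I * (q.1 - q.2)) h2 (q.1 + q.2) h1
  rwa [hTq] at hfin

/-- The CR singular submanifolds `M₁ : w = z̄₁z₂` and `M₂ : w = z̄₁z₂ + z̄₁³` in `ℂ³`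
are not locally biholomorphically equivalent at `0`: no holomorphic map with `H(0) = 0`
and invertible derivative at `0` takes `M₂` into `M₁`. -/
theorem higher_order_invariants_example
    (M₁ M₂ : Set (Fin 3 → ℂ))
    (hM₁ : M₁ = {z : Fin 3 → ℂ | z 2 = conj (z 0) * z 1})
    (hM₂ : M₂ = {z : Fin 3 → ℂ | z 2 = conj (z 0) * z 1 + (conj (z 0))^3}) :
    ¬ ∃ (Ω : Set (Fin 3 → ℂ)) (H : (Fin 3 → ℂ) → (Fin 3 → ℂ)),
        IsOpen Ω ∧ (0 : Fin 3 → ℂ) ∈ Ω ∧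
        DifferentiableOn ℂ H Ω ∧ H 0 = 0 ∧
        Function.Bijective (fderiv ℂ H 0) ∧
        H '' (M₂ ∩ Ω) ⊆ M₁ := by
  rintro ⟨Ω, H, hΩ, h0Ω, hdiff, hH0, hbij, hsub⟩
  obtain ⟨r, hr, hball⟩ := Metric.isOpen_iff.mp hΩ 0 h0Ω
  have hid : ∀ v : Fin 3 → ℂ, v 2 = conj (v 0) * v 1 + (conj (v 0))^3 → v ∈ Ω →
      H v 2 = conj (H v 0) * H v 1 := by
    intro v hv hvΩ
    have hmem : H v ∈ M₁ := hsub ⟨v, ⟨by rw [hM₂]; exact hv, hvΩ⟩, rfl⟩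
    rwa [hM₁] at hmem
  have hdAt : DifferentiableAt ℂ H 0 := hdiff.differentiableAt (hΩ.mem_nhds h0Ω)
  set L := fderiv ℂ H 0 with hL
  have hLf : HasFDerivAt H L 0 := hdAt.hasFDerivAt
  have hH00 : ∀ i : Fin 3, H 0 i = 0 := by intro i; rw [hH0]; rfl
  have hmem : ∀ x y z : ℂ, ‖x‖ < r → ‖y‖ < r → ‖z‖ < r → (![x,y,z] : Fin 3 → ℂ) ∈ Ω := by
    intro x y z hx hy hz
    apply hball
    rw [Metric.mem_ball, dist_zero_right, pi_norm_lt_iff hr]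
    intro i; fin_cases i <;> simpa
  -- derivative along complex lines through 0
  have hHasD : ∀ (b : Fin 3 → ℂ) (i : Fin 3),
      HasDerivAt (fun s : ℂ => H (s • b) i) (L b i) 0 := by
    intro b i
    have h1 : HasDerivAt (fun s : ℂ => s • b) b 0 := by
      simpa using (hasDerivAt_id (0:ℂ)).smul_const b
    have h0' : HasFDerivAt H L ((fun s : ℂ => s • b) 0) := by
      simpa using hLf
    have h2 : HasDerivAt (fun s : ℂ => H (s • b)) (L b) 0 := by
      simpa [Function.comp_def] using h0'.comp_hasDerivAt 0 h1
    have h3 := (ContinuousLinearMap.proj (R := ℂ) (φ := fun _ : Fin 3 => ℂ)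
      i).hasFDerivAt.comp_hasDerivAt 0 h2
    simpa [Function.comp_def] using h3
  have hslope : ∀ (b : Fin 3 → ℂ) (i : Fin 3),
      Tendsto (fun s : ℂ => H (s • b) i / s) (𝓝[≠] 0) (𝓝 (L b i)) := by
    intro b i
    have h4 := hasDerivAt_iff_tendsto_slope.mp (hHasD b i)
    apply h4.congr
    intro s
    rw [slope_def_field]
    simp [hH00 i]
  have hcoordCont : ∀ (b : Fin 3 → ℂ) (i : Fin 3),
      Tendsto (fun s : ℂ => H (s • b) i) (𝓝 0) (𝓝 0) := by
    intro b i
    have hco := (hHasD b i).continuousAt.tendsto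
    simpa [hH00 i] using hco
  have hev_norm : ∀ {δ : ℝ}, 0 < δ → ∀ᶠ s : ℂ in 𝓝[≠] 0, ‖s‖ < δ := by
    intro δ hδ
    have h1 : ∀ᶠ s : ℂ in 𝓝 (0:ℂ), ‖s‖ < δ := by
      filter_upwards [Metric.ball_mem_nhds (0:ℂ) hδ] with s hs
      simpa [dist_zero_right] using hs
    exact h1.filter_mono nhdsWithin_le_nhds
  -- c₂ = 0 : the slice z₁ = 0, w = 0 lies in M₂
  have hb1 : ∀ s : ℂ, (s • (![0,1,0] : Fin 3 → ℂ)) = ![0,s,0] := by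
    intro s; funext j; fin_cases j <;> simp
  have hc2 : L ![0,1,0] 2 = 0 := by
    have hA := hslope ![0,1,0] 2
    have hB : Tendsto (fun s : ℂ => conj (H (s • ![0,1,0]) 0) * (H (s • ![0,1,0]) 1 / s))
        (𝓝[≠] 0) (𝓝 (conj (0:ℂ) * L ![0,1,0] 1)) := by
      apply Tendsto.mul
      · have h1 : Tendsto (fun s : ℂ => conj (H (s • ![0,1,0]) 0)) (𝓝 0) (𝓝 (conj (0:ℂ))) :=
          (Complex.continuous_conj.tendsto 0).comp (hcoordCont ![0,1,0] 0)
        exact h1.mono_left nhdsWithin_le_nhds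
      · exact hslope ![0,1,0] 1
    have hev : ∀ᶠ s : ℂ in 𝓝[≠] 0,
        H (s • ![0,1,0]) 2 / s = conj (H (s • ![0,1,0]) 0) * (H (s • ![0,1,0]) 1 / s) := by
      filter_upwards [hev_norm hr] with s hs
      have hv : ((![0,s,0] : Fin 3 → ℂ)) 2
          = conj ((![0,s,0] : Fin 3 → ℂ) 0) * (![0,s,0] : Fin 3 → ℂ) 1
            + (conj ((![0,s,0] : Fin 3 → ℂ) 0))^3 := by simp
      have hidv := hid ![0,s,0] hv (hmem 0 s 0 (by simpa using hr) hs (by simpa using hr))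
      rw [hb1, hidv, mul_div_assoc]
    have huniq := tendsto_nhds_unique (hA.congr' hev) hB
    simpa using huniq
  -- the two-variable holomorphic slice functions
  set G2 : ℂ × ℂ → ℂ := fun p => H ![p.1, 0, p.2] 0 with hG2def
  have hG2diff : ∀ p : ℂ × ℂ, ‖p.1‖ < r → ‖p.2‖ < r → DifferentiableAt ℂ G2 p := by
    intro p h1 h2
    have hJ : DifferentiableAt ℂ (fun p : ℂ × ℂ => (![p.1, 0, p.2] : Fin 3 → ℂ)) p := by
      rw [differentiableAt_pi]
      intro i; fin_cases i <;> simp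
    have hHd : DifferentiableAt ℂ H ![p.1, 0, p.2] :=
      hdiff.differentiableAt (hΩ.mem_nhds (hmem p.1 0 p.2 h1 (by simpa using hr) h2))
    exact differentiableAt_pi.mp (hHd.comp p hJ) 0
  set Gs : ℂ × ℂ → ℂ := fun p => conj (G2 (conj p.1, conj p.2)) with hGsdef
  have hGsdiff : ∀ p : ℂ × ℂ, ‖p.1‖ < r → ‖p.2‖ < r → DifferentiableAt ℂ Gs p := by
    intro p h1 h2
    exact aux_diffAt_conj_conj (hG2diff (conj p.1, conj p.2) (by simpa using h1)
      (by simpa using h2))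
  have hzero3 : (![(0:ℂ),0,0] : Fin 3 → ℂ) = 0 := by funext j; fin_cases j <;> rfl
  have hGs00 : Gs (0, 0) = 0 := by
    simp only [hGsdef, hG2def, map_zero]
    rw [hzero3]
    simp [hH00 0]
  -- the complexified relation
  set ρ := min r 1 with hρdef
  have hρ : 0 < ρ := lt_min hr one_pos
  have hρr : ρ ≤ r := min_le_left _ _
  have hρ1 : ρ ≤ 1 := min_le_right _ _
  have hcube_lt : ∀ z : ℂ, ‖z‖ < ρ → ‖z^3‖ < r := by
    intro z hz
    rw [norm_pow]
    have h1 : ‖z‖ ≤ 1 := le_of_lt (lt_of_lt_of_le hz hρ1)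
    have h2 : ‖z‖^3 ≤ ‖z‖ := pow_le_of_le_one (norm_nonneg z) h1 (by norm_num)
    exact lt_of_le_of_lt h2 (lt_of_lt_of_le hz hρr)
  set Φ : ℂ × ℂ → ℂ :=
    fun q => H ![q.1, 0, q.2^3] 2 - Gs (q.2, q.1^3) * H ![q.1, 0, q.2^3] 1 with hΦdef
  have hΦdiff : DifferentiableOn ℂ Φ (Metric.ball 0 ρ) := by
    intro q hq
    rw [Metric.mem_ball, dist_zero_right, Prod.norm_def, max_lt_iff] at hq
    obtain ⟨hq1, hq2⟩ := hq
    have hq1r : ‖q.1‖ < r := lt_of_lt_of_le hq1 hρr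
    have hq2r : ‖q.2‖ < r := lt_of_lt_of_le hq2 hρr
    have hJ : DifferentiableAt ℂ (fun q : ℂ × ℂ => (![q.1, 0, q.2^3] : Fin 3 → ℂ)) q := by
      rw [differentiableAt_pi]
      intro i; fin_cases i <;> simp <;> fun_prop
    have hHd : DifferentiableAt ℂ H ![q.1, 0, q.2^3] :=
      hdiff.differentiableAt (hΩ.mem_nhds
        (hmem q.1 0 (q.2^3) hq1r (by simpa using hr) (hcube_lt q.2 hq2)))
    have hcomp := hHd.comp q hJ
    have hco2 : DifferentiableAt ℂ (fun q : ℂ × ℂ => H ![q.1, 0, q.2^3] 2) q :=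
      differentiableAt_pi.mp hcomp 2
    have hco1 : DifferentiableAt ℂ (fun q : ℂ × ℂ => H ![q.1, 0, q.2^3] 1) q :=
      differentiableAt_pi.mp hcomp 1
    have hGsp : DifferentiableAt ℂ (fun q : ℂ × ℂ => Gs (q.2, q.1^3)) q := by
      have hin : DifferentiableAt ℂ (fun q : ℂ × ℂ => ((q.2, q.1^3) : ℂ × ℂ)) q := by
        apply DifferentiableAt.prodMk <;> fun_prop
      exact DifferentiableAt.comp (g := Gs) q (hGsdiff (q.2, q.1^3) hq2r (hcube_lt q.1 hq1)) hin
    exact ((hco2.sub (hGsp.mul hco1))).differentiableWithinAt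
  have hΦvan : ∀ z : ℂ, ‖z‖ < ρ → Φ (z, conj z) = 0 := by
    intro z hz
    have hzr : ‖z‖ < r := lt_of_lt_of_le hz hρr
    have hzc : ‖(conj z)^3‖ < r := by
      rw [show ((conj z)^3 : ℂ) = conj (z^3) by rw [map_pow]]
      have : ‖conj (z^3)‖ = ‖z^3‖ := RCLike.norm_conj _
      rw [this]
      exact hcube_lt z hz
    have hvmem : (![z, 0, (conj z)^3] : Fin 3 → ℂ) ∈ Ω :=
      hmem z 0 ((conj z)^3) hzr (by simpa using hr) hzc
    have hvrel : ((![z, 0, (conj z)^3] : Fin 3 → ℂ)) 2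
        = conj ((![z, 0, (conj z)^3] : Fin 3 → ℂ) 0) * (![z, 0, (conj z)^3] : Fin 3 → ℂ) 1
          + (conj ((![z, 0, (conj z)^3] : Fin 3 → ℂ) 0))^3 := by simp
    have hidv := hid ![z, 0, (conj z)^3] hvrel hvmem
    have hGseq : Gs (conj z, z^3) = conj (H ![z, 0, (conj z)^3] 0) := by
      simp only [hGsdef, hG2def]
      rw [Complex.conj_conj, ← map_pow]
    simp only [hΦdef]
    rw [hGseq]
    rw [hidv]
    ring
  have hΦ0 := aux_vanish_complexification hρ hΦdiff hΦvan
  -- c₁ = 0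
  have hb0 : ∀ s : ℂ, (s • (![1,0,0] : Fin 3 → ℂ)) = ![s,0,0] := by
    intro s; funext j; fin_cases j <;> simp
  have hc1 : L ![1,0,0] 2 = 0 := by
    have hA := hslope ![1,0,0] 2
    have hB : Tendsto (fun z : ℂ => Gs (0, z^3) * (H (z • ![1,0,0]) 1 / z))
        (𝓝[≠] 0) (𝓝 (Gs (0,0) * L ![1,0,0] 1)) := by
      apply Tendsto.mul
      · have hin : Tendsto (fun z : ℂ => (((0:ℂ), z^3) : ℂ × ℂ)) (𝓝 0) (𝓝 ((0:ℂ), (0:ℂ))) := by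
          have hco : Continuous (fun z : ℂ => (((0:ℂ), z^3) : ℂ × ℂ)) := by fun_prop
          have := hco.tendsto 0
          simpa using this
        have hGc : ContinuousAt Gs ((0:ℂ), (0:ℂ)) :=
          (hGsdiff (0,0) (by simpa using hr) (by simpa using hr)).continuousAt
        exact (hGc.tendsto.comp hin).mono_left nhdsWithin_le_nhds
      · exact hslope ![1,0,0] 1
    have hev : ∀ᶠ z : ℂ in 𝓝[≠] 0,
        H (z • ![1,0,0]) 2 / z = Gs (0, z^3) * (H (z • ![1,0,0]) 1 / z) := by
      filter_upwards [hev_norm (half_pos hρ)] with z hz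
      have hΦz := hΦ0 (z, 0) (by simpa using hz) (by simpa using half_pos hρ)
      simp only [hΦdef] at hΦz
      rw [sub_eq_zero] at hΦz
      have hΦz' : H ![z, 0, 0] 2 = Gs (0, z^3) * H ![z, 0, 0] 1 := by
        simpa using hΦz
      rw [hb0, hΦz', mul_div_assoc]
    have huniq := tendsto_nhds_unique (hA.congr' hev) hB
    rw [huniq, hGs00, zero_mul]
  -- c₃ = 0
  have hb2 : ∀ s : ℂ, (s • (![0,0,1] : Fin 3 → ℂ)) = ![0,0,s] := by
    intro s; funext j; fin_cases j <;> simp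
  have hcube : Tendsto (fun ζ : ℂ => ζ^3) (𝓝[≠] (0:ℂ)) (𝓝[≠] (0:ℂ)) := by
    rw [tendsto_nhdsWithin_iff]
    constructor
    · have := ((continuous_pow 3 : Continuous fun z : ℂ => z^3).tendsto 0).mono_left
        (nhdsWithin_le_nhds (s := {(0:ℂ)}ᶜ))
      simpa using this
    · filter_upwards [self_mem_nhdsWithin] with ζ hζ
      exact pow_ne_zero 3 hζ
  have hc3 : L ![0,0,1] 2 = 0 := by
    have hA : Tendsto (fun ζ : ℂ => H ((ζ^3) • ![0,0,1]) 2 / ζ^3) (𝓝[≠] 0)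
        (𝓝 (L ![0,0,1] 2)) := by
      have := (hslope ![0,0,1] 2).comp hcube
      simpa [Function.comp_def] using this
    have hB : Tendsto (fun ζ : ℂ => Gs (ζ, 0) * (H ((ζ^3) • ![0,0,1]) 1 / ζ^3))
        (𝓝[≠] 0) (𝓝 (Gs (0,0) * L ![0,0,1] 1)) := by
      apply Tendsto.mul
      · have hin : Tendsto (fun ζ : ℂ => ((ζ, (0:ℂ)) : ℂ × ℂ)) (𝓝 0) (𝓝 ((0:ℂ), (0:ℂ))) := by
          have hco : Continuous (fun ζ : ℂ => ((ζ, (0:ℂ)) : ℂ × ℂ)) := by fun_prop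
          have := hco.tendsto 0
          simpa using this
        have hGc : ContinuousAt Gs ((0:ℂ), (0:ℂ)) :=
          (hGsdiff (0,0) (by simpa using hr) (by simpa using hr)).continuousAt
        exact (hGc.tendsto.comp hin).mono_left nhdsWithin_le_nhds
      · have := (hslope ![0,0,1] 1).comp hcube
        simpa [Function.comp_def] using this
    have hev : ∀ᶠ ζ : ℂ in 𝓝[≠] 0,
        H ((ζ^3) • ![0,0,1]) 2 / ζ^3 = Gs (ζ, 0) * (H ((ζ^3) • ![0,0,1]) 1 / ζ^3) := by
      filter_upwards [hev_norm (half_pos hρ)] with ζ hζ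
      have hΦz := hΦ0 (0, ζ) (by simpa using half_pos hρ) (by simpa using hζ)
      simp only [hΦdef] at hΦz
      rw [sub_eq_zero] at hΦz
      have hΦz' : H ![0, 0, ζ^3] 2 = Gs (ζ, 0) * H ![0, 0, ζ^3] 1 := by
        simpa using hΦz
      rw [hb2, hΦz', mul_div_assoc]
    have huniq := tendsto_nhds_unique (hA.congr' hev) hB
    rw [huniq, hGs00, zero_mul]
  -- conclusion: the last row of L vanishes, contradicting bijectivity
  have hrow : ∀ v : Fin 3 → ℂ, L v 2 = 0 := by
    intro v
    have hv : v = v 0 • ![1,0,0] + v 1 • ![0,1,0] + v 2 • ![0,0,1] := by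
      funext j; fin_cases j <;> simp
    rw [hv, map_add, map_add, map_smul, map_smul, map_smul]
    simp only [Pi.add_apply, Pi.smul_apply, smul_eq_mul]
    rw [hc1, hc2, hc3]
    ring
  obtain ⟨w, hw⟩ := hbij.2 ![0,0,1]
  have h1 : L w 2 = 1 := by
    have := congrFun hw 2
    simpa using this
  exact one_ne_zero (h1.symm.trans (hrow w))
end
end

section
/- Fix an integer k ≥ 0 and define g : ℂ → ℂ by g(ζ) = (k + 3)·conj(ζ)^{k+2}/ζ for ζ ≠ 0 and g(0) = 0. Then g is of class C^k on ℂ (ContDiff ℝ k, viewing ℂ as a real vector space), but there is no open neighborhood of 0 on which g is of class C^{k+1}. (Here g is the quotient ρ_{z̄₂}/ρ_{z̄₁}, as a function of z₂, for the CR singular submanifold M ⊆ ℂ³ given by w = conj(z₁)·z₂ + conj(z₂)^{k+3}, whose Wirtinger derivatives are ρ_{z̄₁} = z₂ and ρ_{z̄₂} = (k+3)·conj(z₂)^{k+2}; hence the extended CR line bundle of this M near 0 is C^k but not C^{k+1}.) -/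
open Complex Filter Topology Metric
open scoped ComplexConjugate

noncomputable section

namespace QCk

-- === positive part infrastructure (already checked) ===
def conjL : ℂ →L[ℝ] ℂ := Complex.conjCLE.toContinuousLinearMap

@[simp] lemma conjL_apply (z : ℂ) : conjL z = conj z := rfl

def auxF (a b : ℕ) : ℂ → ℂ := fun ζ => conj ζ ^ a / ζ ^ b

lemma auxF_zero (a b : ℕ) (ha : 1 ≤ a) : auxF a b 0 = 0 := by
  simp [auxF, zero_pow (by omega : a ≠ 0)]

@[simp] lemma norm_conj' (z : ℂ) : ‖conj z‖ = ‖z‖ := by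
  simp [Complex.norm_conj]

lemma norm_auxF_le (a b : ℕ) (hab : b + 1 ≤ a) (ζ : ℂ) :
    ‖auxF a b ζ‖ ≤ ‖ζ‖ ^ (a - b) := by
  rcases eq_or_ne ζ 0 with rfl | hζ
  · rw [auxF_zero a b (by omega)]
    simp [zero_pow (by omega : a - b ≠ 0)]
  · have hn : ‖ζ‖ ≠ 0 := by simpa using hζ
    rw [auxF, norm_div, norm_pow, norm_pow, norm_conj',
      pow_sub₀ _ hn (by omega : b ≤ a)]
    rw [div_eq_mul_inv]

lemma auxF_continuous (a b : ℕ) (hab : b + 1 ≤ a) : Continuous (auxF a b) := by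
  rw [continuous_iff_continuousAt]
  intro ζ
  rcases eq_or_ne ζ 0 with rfl | hζ
  · rw [ContinuousAt, auxF_zero a b (by omega)]
    apply squeeze_zero_norm (norm_auxF_le a b hab)
    have : Continuous fun z : ℂ => ‖z‖ ^ (a - b) := continuous_norm.pow _
    simpa [zero_pow (by omega : a - b ≠ 0)] using this.tendsto 0
  · exact ((continuous_star.pow a).continuousAt).div
      ((continuous_pow b).continuousAt) (pow_ne_zero _ hζ)

lemma hasFDerivAt_auxF (a b : ℕ) (hb : 1 ≤ b) (hab : b + 2 ≤ a) (ζ : ℂ) :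
    HasFDerivAt (auxF a b)
      (((a : ℂ) * auxF (a - 1) b ζ) • conjL
        - ((b : ℂ) * auxF a (b + 1) ζ) • ContinuousLinearMap.id ℝ ℂ) ζ := by
  rcases eq_or_ne ζ 0 with rfl | hζ
  · have h0 : (((a : ℂ) * auxF (a - 1) b 0) • conjL
        - ((b : ℂ) * auxF a (b + 1) 0) • ContinuousLinearMap.id ℝ ℂ) = 0 := by
      rw [auxF_zero (a-1) b (by omega), auxF_zero a (b+1) (by omega)]
      apply ContinuousLinearMap.ext
      intro v
      simp
    rw [h0]
    rw [hasFDerivAt_iff_isLittleO_nhds_zero]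
    simp only [auxF_zero a b (by omega), ContinuousLinearMap.zero_apply, zero_add, sub_zero]
    rw [Asymptotics.isLittleO_iff]
    intro ε hε
    have hball : Metric.ball (0:ℂ) (min ε 1) ∈ 𝓝 (0:ℂ) :=
      Metric.ball_mem_nhds 0 (lt_min hε one_pos)
    filter_upwards [hball] with z hz
    rw [Metric.mem_ball, dist_zero_right] at hz
    calc ‖auxF a b z‖ ≤ ‖z‖ ^ (a - b) := norm_auxF_le a b (by omega) z
      _ ≤ ‖z‖ ^ 2 := by
          apply pow_le_pow_of_le_one (norm_nonneg _) (le_of_lt (lt_of_lt_of_le hz (min_le_right _ _))) (by omega)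
      _ = ‖z‖ * ‖z‖ := sq ‖z‖
      _ ≤ ε * ‖z‖ := by
          apply mul_le_mul_of_nonneg_right (le_of_lt (lt_of_lt_of_le hz (min_le_left _ _))) (norm_nonneg _)
  · obtain ⟨a', rfl⟩ : ∃ a', a = a' + 1 := ⟨a - 1, by omega⟩
    obtain ⟨b', rfl⟩ : ∃ b', b = b' + 1 := ⟨b - 1, by omega⟩
    have hconjζ : conj ζ ≠ 0 := star_ne_zero.mpr hζ
    have hA : HasFDerivAt (fun z : ℂ => conj z ^ (a' + 1))
        ((((ContinuousLinearMap.smulRight (1 : ℂ →L[ℂ] ℂ)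
          ((a' + 1 : ℕ) * conj ζ ^ a')).restrictScalars ℝ).comp conjL)) ζ := by
      have h1 := ((hasDerivAt_pow (a' + 1) (conj ζ)).hasFDerivAt).restrictScalars ℝ
      have h2 : HasFDerivAt (fun z : ℂ => conj z) conjL ζ := conjL.hasFDerivAt
      have := h1.comp ζ h2
      exact this
    have hB : HasFDerivAt (fun z : ℂ => (z ^ (b' + 1))⁻¹)
        (((ContinuousLinearMap.smulRight (1 : ℂ →L[ℂ] ℂ)
          (-((b' + 1 : ℕ) * ζ ^ b') / (ζ ^ (b' + 1)) ^ 2)).restrictScalars ℝ)) ζ := by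
      have h1 := ((hasDerivAt_pow (b' + 1) ζ).inv (pow_ne_zero _ hζ)).hasFDerivAt
      exact h1.restrictScalars ℝ
    have hprod := hA.mul hB
    have heq : auxF (a' + 1) (b' + 1) = fun z : ℂ => conj z ^ (a' + 1) * (z ^ (b' + 1))⁻¹ := by
      funext z; rw [auxF, div_eq_mul_inv]
    rw [heq]
    refine hprod.congr_fderiv (Eq.symm ?_)
    apply ContinuousLinearMap.ext
    intro v
    simp only [ContinuousLinearMap.sub_apply, ContinuousLinearMap.smul_apply,
      ContinuousLinearMap.add_apply, ContinuousLinearMap.coe_comp',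
      ContinuousLinearMap.coe_restrictScalars', Function.comp_apply,
      ContinuousLinearMap.smulRight_apply, ContinuousLinearMap.one_apply,
      ContinuousLinearMap.coe_id', id_eq, conjL_apply, auxF, smul_eq_mul]
    push_cast
    field_simp
    ring

lemma auxF_contDiff (n : ℕ) : ∀ a b : ℕ, 1 ≤ b → b + n + 1 ≤ a → ContDiff ℝ n (auxF a b) := by
  induction n with
  | zero =>
    intro a b hb hab
    exact contDiff_zero.2 (auxF_continuous a b (by omega))
  | succ n ih =>
    intro a b hb hab
    have : ((n + 1 : ℕ) : WithTop ℕ∞) = (n : WithTop ℕ∞) + 1 := by push_cast; rfl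
    rw [this, contDiff_succ_iff_fderiv]
    refine ⟨fun ζ => (hasFDerivAt_auxF a b hb (by omega) ζ).differentiableAt, by simp, ?_⟩
    have hfd : fderiv ℝ (auxF a b) = fun ζ =>
        (((a : ℂ) * auxF (a - 1) b ζ) • conjL
          - ((b : ℂ) * auxF a (b + 1) ζ) • ContinuousLinearMap.id ℝ ℂ) := by
      funext ζ; exact (hasFDerivAt_auxF a b hb (by omega) ζ).fderiv
    have hrw : (fun ζ => (((a : ℂ) * auxF (a - 1) b ζ) • conjL
          - ((b : ℂ) * auxF a (b + 1) ζ) • ContinuousLinearMap.id ℝ ℂ))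
        = fun ζ => ((ContinuousLinearMap.id ℝ ℂ).smulRight conjL) ((a : ℂ) * auxF (a - 1) b ζ)
          - ((ContinuousLinearMap.id ℝ ℂ).smulRight (ContinuousLinearMap.id ℝ ℂ))
            ((b : ℂ) * auxF a (b + 1) ζ) := by
      funext ζ
      simp
    rw [hfd, hrw]
    have h1 : ContDiff ℝ n (auxF (a - 1) b) := ih (a - 1) b hb (by omega)
    have h2 : ContDiff ℝ n (auxF a (b + 1)) := ih a (b + 1) (by omega) (by omega)
    exact ((contDiff_const.mul h1).continuousLinearMap_comp _).sub
      ((contDiff_const.mul h2).continuousLinearMap_comp _)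

-- === 1-d iterated derivative of monomials ===
lemma iteratedDeriv_cpow (n : ℕ) (c : ℂ) :
    iteratedDeriv n (fun t : ℝ => c * (t : ℂ) ^ n) = fun _ => c * (n.factorial : ℂ) := by
  induction n generalizing c with
  | zero => funext t; simp
  | succ n ih =>
    funext t
    rw [iteratedDeriv_succ']
    have hderiv : (deriv fun t : ℝ => c * (t : ℂ) ^ (n + 1))
        = fun s : ℝ => (c * ((n : ℂ) + 1)) * (s : ℂ) ^ n := by
      funext s
      have h1 : HasDerivAt (fun z : ℂ => c * z ^ (n + 1))
          (c * ((n + 1 : ℕ) * (s : ℂ) ^ n)) (s : ℝ) :=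
        (hasDerivAt_pow (n + 1) ((s : ℝ) : ℂ)).const_mul c
      have h2 := h1.comp_ofReal
      rw [h2.deriv]
      push_cast
      ring
    rw [hderiv, ih]
    rw [Nat.factorial_succ]
    push_cast
    ring

-- === trig polynomial lemma ===
def fixLast {n : ℕ} (M : MultilinearMap ℝ (fun _ : Fin (n + 1) => ℂ) ℂ) (c : ℂ) :
    MultilinearMap ℝ (fun _ : Fin n => ℂ) ℂ :=
  (LinearMap.applyₗ c).compMultilinearMap M.curryRight

@[simp] lemma fixLast_apply {n : ℕ} (M : MultilinearMap ℝ (fun _ : Fin (n + 1) => ℂ) ℂ)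
    (c : ℂ) (v : Fin n → ℂ) : fixLast M c v = M (Fin.snoc v c) := rfl

lemma map_snoc_diag {n : ℕ} (M : MultilinearMap ℝ (fun _ : Fin (n + 1) => ℂ) ℂ)
    (v : Fin n → ℂ) (a b : ℝ) (x y : ℂ) :
    M (Fin.snoc v (a • x + b • y)) = a • M (Fin.snoc v x) + b • M (Fin.snoc v y) := by
  have h1 : Fin.snoc (α := fun _ : Fin (n+1) => ℂ) v (a • x + b • y)
      = Function.update (Fin.snoc (α := fun _ : Fin (n+1) => ℂ) v (0 : ℂ)) (Fin.last n)
        (a • x + b • y) := by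
    rw [Fin.update_snoc_last]
  have h2 : Fin.snoc (α := fun _ : Fin (n+1) => ℂ) v x
      = Function.update (Fin.snoc (α := fun _ : Fin (n+1) => ℂ) v (0 : ℂ)) (Fin.last n) x := by
    rw [Fin.update_snoc_last]
  have h3 : Fin.snoc (α := fun _ : Fin (n+1) => ℂ) v y
      = Function.update (Fin.snoc (α := fun _ : Fin (n+1) => ℂ) v (0 : ℂ)) (Fin.last n) y := by
    rw [Fin.update_snoc_last]
  rw [h1, h2, h3, M.map_update_add, M.map_update_smul, M.map_update_smul]

lemma exists_poly : ∀ (n : ℕ) (M : MultilinearMap ℝ (fun _ : Fin n => ℂ) ℂ),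
    ∃ p : Polynomial ℂ, ∀ θ : ℝ,
      p.eval (Complex.exp (θ * I)) = Complex.exp (θ * I) ^ n * M (fun _ => Complex.exp (θ * I)) := by
  intro n
  induction n with
  | zero =>
    intro M
    refine ⟨Polynomial.C (M ![]), fun θ => ?_⟩
    rw [Polynomial.eval_C, pow_zero, one_mul]
    congr 1
    funext i
    exact i.elim0
  | succ n ih =>
    intro M
    obtain ⟨p₁, hp₁⟩ := ih (fixLast M 1)
    obtain ⟨p₂, hp₂⟩ := ih (fixLast M I)
    refine ⟨Polynomial.C (1/2 : ℂ) * (Polynomial.X ^ 2 + 1) * p₁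
      + Polynomial.C (-I/2) * (Polynomial.X ^ 2 - 1) * p₂, fun θ => ?_⟩
    set w := Complex.exp (θ * I) with hw
    have e1 : w ^ 2 + 1 = 2 * w * (Real.cos θ : ℂ) := by
      rw [hw, Complex.exp_mul_I, Complex.ofReal_cos]
      have h := Complex.sin_sq_add_cos_sq (θ : ℂ)
      linear_combination (-1 : ℂ) * h + Complex.sin (θ : ℂ) ^ 2 * Complex.I_sq
    have e2 : w ^ 2 - 1 = 2 * I * w * (Real.sin θ : ℂ) := by
      rw [hw, Complex.exp_mul_I, Complex.ofReal_sin]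
      have h := Complex.sin_sq_add_cos_sq (θ : ℂ)
      linear_combination h - Complex.sin (θ : ℂ) ^ 2 * Complex.I_sq
    have hdiag : (fun _ : Fin (n + 1) => w) = Fin.snoc (fun _ : Fin n => w) w := by
      funext i
      refine Fin.lastCases ?_ ?_ i
      · rw [Fin.snoc_last]
      · intro j; rw [Fin.snoc_castSucc]
    have hzw : w = (Real.cos θ : ℝ) • (1 : ℂ) + (Real.sin θ : ℝ) • I := by
      simp [hw, Complex.exp_mul_I, ← Complex.ofReal_cos, ← Complex.ofReal_sin, Complex.real_smul]
    have hexp := map_snoc_diag M (fun _ : Fin n => w) (Real.cos θ) (Real.sin θ) 1 I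
    rw [← hzw] at hexp
    have hA : M (Fin.snoc (fun _ : Fin n => w) 1) = (fixLast M 1) (fun _ : Fin n => w) := rfl
    have hB : M (Fin.snoc (fun _ : Fin n => w) I) = (fixLast M I) (fun _ : Fin n => w) := rfl
    rw [hdiag, hexp, hA, hB]
    have hp₁' := hp₁ θ; have hp₂' := hp₂ θ; rw [← hw] at hp₁' hp₂'
    simp only [Polynomial.eval_add, Polynomial.eval_mul, Polynomial.eval_C, Polynomial.eval_pow,
      Polynomial.eval_X, Polynomial.eval_one, Polynomial.eval_sub, hp₁', hp₂', smul_eq_mul,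
      Complex.real_smul]
    linear_combination (1/2 * w ^ n * ((fixLast M 1) (fun _ : Fin n => w))) * e1
      + (-I/2 * w ^ n * ((fixLast M I) (fun _ : Fin n => w))) * e2
      + (- w ^ (n + 1) * (Real.sin θ : ℂ) * ((fixLast M I) (fun _ : Fin n => w))) * Complex.I_sq

lemma iteratedFDeriv_congr_nhds {E F : Type*} [NormedAddCommGroup E] [NormedSpace ℝ E]
    [NormedAddCommGroup F] [NormedSpace ℝ F] {f₁ f : E → F} {x : E}
    (h : f₁ =ᶠ[𝓝 x] f) (n : ℕ) : iteratedFDeriv ℝ n f₁ x = iteratedFDeriv ℝ n f x := by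
  rw [← iteratedFDerivWithin_univ, ← iteratedFDerivWithin_univ]
  exact Filter.EventuallyEq.iteratedFDerivWithin_eq (by rwa [nhdsWithin_univ]) (h.self_of_nhds) n

end QCk

/-- The function `g(ζ) = (k+3)·ζ̄^{k+2}/ζ`, `g(0) = 0` (the quotient `ρ_{z̄₂}/ρ_{z̄₁}`
for the submanifold `w = z̄₁z₂ + z̄₂^{k+3}` of `ℂ³`) is `C^k` on `ℂ` but not `C^{k+1}`
on any neighborhood of `0`. -/
theorem quotient_Ck_not_Ck1 (k : ℕ) (g : ℂ → ℂ)
    (hg : ∀ ζ : ℂ, ζ ≠ 0 → g ζ = ((k : ℂ) + 3) * (conj ζ)^(k+2) / ζ)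
    (hg0 : g 0 = 0) :
    ContDiff ℝ k g ∧
    ¬ ∃ W : Set ℂ, IsOpen W ∧ (0 : ℂ) ∈ W ∧ ContDiffOn ℝ (k+1) g W := by
  have hgek : g = fun ζ => ((k:ℂ) + 3) * QCk.auxF (k+2) 1 ζ := by
    funext ζ
    rcases eq_or_ne ζ 0 with rfl | hζ
    · rw [hg0, QCk.auxF_zero _ _ (by omega), mul_zero]
    · rw [hg ζ hζ, QCk.auxF, pow_one, mul_div_assoc]
  constructor
  · rw [hgek]
    exact contDiff_const.mul (QCk.auxF_contDiff k (k+2) 1 le_rfl (by omega))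
  rintro ⟨W, hWo, hW0, hCD⟩
  clear hgek
  set s : Set ℂ := {(0:ℂ)}ᶜ with hsdef
  have hso : IsOpen s := isOpen_compl_singleton
  have hmem : ∀ {z : ℂ}, z ≠ 0 → z ∈ s := fun hz => hz
  -- g is smooth enough away from 0
  have hgs : ContDiffOn ℝ (↑k + 1) g s := by
    have h1 : ContDiffOn ℝ (↑k + 1) (fun ζ : ℂ => (((k:ℂ)+3) * (conj ζ)^(k+2)) * ζ⁻¹) s :=
      ((contDiff_const.mul ((Complex.conjCLE.contDiff).pow (k+2))).contDiffOn).mul (contDiffOn_inv ℝ)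
    exact h1.congr (fun ζ hζ => by rw [hg ζ hζ, div_eq_mul_inv])
  have hik : ((k+1 : ℕ) : WithTop ℕ∞) ≤ (k : WithTop ℕ∞) + 1 := by push_cast; exact le_rfl
  -- continuity of the top derivative at 0
  have hFW : ContinuousOn (iteratedFDeriv ℝ (k+1) g) W := by
    have h1 := hCD.continuousOn_iteratedFDerivWithin (m := k+1) hik hWo.uniqueDiffOn
    exact h1.congr (fun x hx => (iteratedFDerivWithin_of_isOpen (k+1) hWo hx).symm)
  have hF0 : ContinuousAt (iteratedFDeriv ℝ (k+1) g) 0 := hFW.continuousAt (hWo.mem_nhds hW0)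
  -- multiplicativity of g
  have hmulc : ∀ (c z : ℂ), c ≠ 0 → g (c * z) = (conj c ^ (k+2) / c) * g z := by
    intro c z hc
    rcases eq_or_ne z 0 with rfl | hz
    · rw [mul_zero, hg0, mul_zero]
    · rw [hg _ (mul_ne_zero hc hz), hg _ hz]
      rw [map_mul]
      field_simp
      ring
  -- the key scaling identity for the top derivative
  have key : ∀ c : ℂ, c ≠ 0 → ∀ v : Fin (k+1) → ℂ,
      iteratedFDeriv ℝ (k+1) g c (fun i => c * v i)
        = (conj c ^ (k+2) / c) * iteratedFDeriv ℝ (k+1) g 1 v := by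
    intro c hc v
    set Lc : ℂ →L[ℝ] ℂ := c • ContinuousLinearMap.id ℝ ℂ with hLcdef
    have hLc_apply : ∀ z : ℂ, Lc z = c * z := fun z => by
      rw [hLcdef]; simp [smul_eq_mul]
    have hpre : Lc ⁻¹' s = s := by
      ext z
      simp only [Set.mem_preimage, hLc_apply, hsdef, Set.mem_compl_iff, Set.mem_singleton_iff]
      constructor
      · intro h hz; exact h (by rw [hz, mul_zero])
      · intro h hz; exact h (by rcases mul_eq_zero.1 hz with h' | h'; exact absurd h' hc; exact h')
    have hLc1 : Lc 1 = c := by rw [hLc_apply, mul_one]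
    have hcomp := Lc.iteratedFDerivWithin_comp_right (f := g) hgs hso.uniqueDiffOn
      (by rw [hpre]; exact hso.uniqueDiffOn) (x := (1:ℂ)) (by rw [hLc1]; exact hmem hc) hik
    rw [hpre] at hcomp
    have hgl : (g ∘ Lc) = fun z => (conj c ^ (k+2) / c) * g z := by
      funext z; rw [Function.comp_apply, hLc_apply, hmulc c z hc]
    set Pc : ℂ →L[ℝ] ℂ := (conj c ^ (k+2) / c) • ContinuousLinearMap.id ℝ ℂ with hPcdef
    have hPc_apply : ∀ z : ℂ, Pc z = (conj c ^ (k+2) / c) * z := fun z => by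
      rw [hPcdef]; simp [smul_eq_mul]
    have hcomp2 := Pc.iteratedFDerivWithin_comp_left (f := g) (hgs 1 (hmem one_ne_zero)) hso.uniqueDiffOn
      (hmem one_ne_zero) hik
    have hPg : (Pc ∘ g) = fun z => (conj c ^ (k+2) / c) * g z := by
      funext z; rw [Function.comp_apply, hPc_apply]
    -- pass to global iterated derivatives
    have e1 : iteratedFDerivWithin ℝ (k+1) (g ∘ Lc) s 1 = iteratedFDerivWithin ℝ (k+1) (Pc ∘ g) s 1 := by
      rw [hgl, hPg]
    have e2 : iteratedFDerivWithin ℝ (k+1) g s (Lc 1) = iteratedFDeriv ℝ (k+1) g c := by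
      rw [hLc1]; exact iteratedFDerivWithin_of_isOpen (k+1) hso (hmem hc)
    have e3 : iteratedFDerivWithin ℝ (k+1) g s 1 = iteratedFDeriv ℝ (k+1) g 1 :=
      iteratedFDerivWithin_of_isOpen (k+1) hso (hmem one_ne_zero)
    rw [e2] at hcomp
    rw [e3] at hcomp2
    have := hcomp.symm.trans (e1.trans hcomp2)
    -- apply to v
    have happ := congrArg (fun (Φ : ContinuousMultilinearMap ℝ (fun _ : Fin (k+1) => ℂ) ℂ) => Φ v) this
    simp only [ContinuousMultilinearMap.compContinuousLinearMap_apply,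
      ContinuousLinearMap.compContinuousMultilinearMap_coe, Function.comp_apply] at happ
    have hv : (fun i => Lc (v i)) = fun i => c * v i := funext fun i => hLc_apply (v i)
    rw [hv, hPc_apply] at happ
    exact happ
  -- radial limit: values of the top derivative at 0 along the circle
  set c0 : ℂ := iteratedFDeriv ℝ (k+1) g 1 (fun _ => 1) with hc0def
  have hcirc : ∀ θ : ℝ, iteratedFDeriv ℝ (k+1) g 0 (fun _ => Complex.exp (↑θ*I))
      = (conj (Complex.exp (↑θ*I)))^(k+2) / Complex.exp (↑θ*I) * c0 := by
    intro θ
    set u : ℂ := Complex.exp (↑θ*I) with hu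
    have hu0 : u ≠ 0 := Complex.exp_ne_zero _
    have hconst : ∀ t : ℝ, t ≠ 0 → iteratedFDeriv ℝ (k+1) g (↑t * u) (fun _ => u)
        = (conj u)^(k+2)/u * c0 := by
      intro t ht
      have htc : ((t:ℂ)) ≠ 0 := Complex.ofReal_ne_zero.mpr ht
      have hc : (↑t * u : ℂ) ≠ 0 := mul_ne_zero htc hu0
      have h1 := key (↑t * u) hc (fun _ => 1)
      have h2 : (fun _ : Fin (k+1) => (↑t * u : ℂ) * 1) = fun _ : Fin (k+1) => t • u := by
        funext i; rw [mul_one, Complex.real_smul]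
      rw [h2] at h1
      have h3 : iteratedFDeriv ℝ (k+1) g (↑t*u) (fun _ : Fin (k+1) => t • u)
          = (t^(k+1) : ℝ) • iteratedFDeriv ℝ (k+1) g (↑t*u) (fun _ => u) := by
        have := (iteratedFDeriv ℝ (k+1) g (↑t*u)).map_smul_univ (fun _ : Fin (k+1) => t)
          (fun _ => u)
        simpa using this
      rw [h3] at h1
      have h4 : conj ((t:ℂ) * u) ^ (k+2) / ((t:ℂ)*u) = (t:ℂ)^(k+1) * ((conj u)^(k+2)/u) := by
        rw [map_mul, Complex.conj_ofReal, mul_pow]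
        field_simp
        ring
      rw [h4] at h1
      have h5 : ((t:ℝ)^(k+1)) • iteratedFDeriv ℝ (k+1) g (↑t*u) (fun _ => u)
          = ((t:ℂ))^(k+1) * iteratedFDeriv ℝ (k+1) g (↑t*u) (fun _ => u) := by
        rw [Complex.real_smul]; push_cast; ring
      rw [h5, mul_assoc] at h1
      exact mul_left_cancel₀ (pow_ne_zero (k+1) htc) h1
    have hmap : ContinuousAt (fun t : ℝ => (↑t * u : ℂ)) 0 :=
      (Complex.continuous_ofReal.mul continuous_const).continuousAt
    have h0pt : ContinuousAt (iteratedFDeriv ℝ (k+1) g) (((0:ℝ):ℂ) * u) := by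
      rw [show ((0:ℝ):ℂ) * u = 0 by simp]
      exact hF0
    have hcompc : ContinuousAt (fun t : ℝ => iteratedFDeriv ℝ (k+1) g (↑t * u)) 0 :=
      ContinuousAt.comp (g := iteratedFDeriv ℝ (k+1) g)
        (f := fun t : ℝ => ((t:ℂ) * u : ℂ)) h0pt hmap
    have hev : Continuous fun (Φ : ContinuousMultilinearMap ℝ (fun _ : Fin (k+1) => ℂ) ℂ) =>
        Φ (fun _ => u) := continuous_eval_const _
    have hca : ContinuousAt (fun t : ℝ => iteratedFDeriv ℝ (k+1) g (↑t * u) (fun _ => u)) 0 :=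
      hev.continuousAt.comp hcompc
    have htends : Tendsto (fun t : ℝ => iteratedFDeriv ℝ (k+1) g (↑t*u) (fun _ => u)) (𝓝[≠] 0)
        (𝓝 (iteratedFDeriv ℝ (k+1) g 0 (fun _ => u))) := by
      have hval : iteratedFDeriv ℝ (k+1) g (((0:ℝ):ℂ) * u) (fun _ => u)
          = iteratedFDeriv ℝ (k+1) g 0 (fun _ => u) := by norm_num
      have h : Tendsto (fun t : ℝ => iteratedFDeriv ℝ (k+1) g (↑t*u) (fun _ => u)) (𝓝[≠] (0:ℝ))
          (𝓝 (iteratedFDeriv ℝ (k+1) g (((0:ℝ):ℂ) * u) (fun _ => u))) :=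
        Tendsto.mono_left hca.tendsto nhdsWithin_le_nhds
      rwa [hval] at h
    have hconstT : Tendsto (fun t : ℝ => iteratedFDeriv ℝ (k+1) g (↑t*u) (fun _ => u)) (𝓝[≠] 0)
        (𝓝 ((conj u)^(k+2)/u * c0)) := by
      apply Tendsto.congr' _ tendsto_const_nhds
      filter_upwards [self_mem_nhdsWithin] with t ht
      exact (hconst t ht).symm
    exact tendsto_nhds_unique htends hconstT
  -- compute c0
  have hc0val : c0 = ((k:ℂ)+3) * (((k+1).factorial : ℕ) : ℂ) := by
    have hpre : (⇑Complex.ofRealCLM ⁻¹' s) = {(0:ℝ)}ᶜ := by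
      ext t; simp [hsdef]
    have hmem1 : Complex.ofRealCLM (1:ℝ) ∈ s := by
      simp [hsdef]
    have hcomp := Complex.ofRealCLM.iteratedFDerivWithin_comp_right (f := g) hgs hso.uniqueDiffOn
      (by rw [hpre]; exact (isOpen_compl_singleton).uniqueDiffOn) (x := (1:ℝ)) hmem1 hik
    rw [hpre] at hcomp
    have hL : iteratedFDerivWithin ℝ (k+1) (g ∘ ⇑Complex.ofRealCLM) {(0:ℝ)}ᶜ 1
        = iteratedFDeriv ℝ (k+1) (g ∘ ⇑Complex.ofRealCLM) 1 :=
      iteratedFDerivWithin_of_isOpen (k+1) isOpen_compl_singleton (by norm_num)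
    have hR : iteratedFDerivWithin ℝ (k+1) g s (Complex.ofRealCLM (1:ℝ))
        = iteratedFDeriv ℝ (k+1) g 1 := by
      rw [show Complex.ofRealCLM (1:ℝ) = (1:ℂ) by simp]
      exact iteratedFDerivWithin_of_isOpen (k+1) hso (hmem one_ne_zero)
    rw [hL, hR] at hcomp
    have happ := congrArg
      (fun (Φ : ContinuousMultilinearMap ℝ (fun _ : Fin (k+1) => ℝ) ℂ) => Φ (fun _ => (1:ℝ))) hcomp
    simp only [ContinuousMultilinearMap.compContinuousLinearMap_apply] at happ
    have hR2 : (fun _ : Fin (k+1) => Complex.ofRealCLM (1:ℝ)) = fun _ : Fin (k+1) => (1:ℂ) := by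
      funext i; simp
    rw [hR2] at happ
    have hEv : (g ∘ ⇑Complex.ofRealCLM) =ᶠ[𝓝 (1:ℝ)] fun t : ℝ => ((k:ℂ)+3) * (t:ℂ)^(k+1) := by
      have hmemnhds : ({(0:ℝ)}ᶜ : Set ℝ) ∈ 𝓝 (1:ℝ) :=
        isOpen_compl_singleton.mem_nhds (by norm_num)
      filter_upwards [hmemnhds] with t ht
      have ht0 : t ≠ 0 := ht
      have htne : (t:ℂ) ≠ 0 := Complex.ofReal_ne_zero.mpr ht0
      rw [Function.comp_apply, show Complex.ofRealCLM t = (t:ℂ) from rfl, hg _ htne,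
        Complex.conj_ofReal]
      rw [pow_succ _ (k+1), ← mul_assoc, mul_div_assoc, div_self htne, mul_one]
    have hLL := QCk.iteratedFDeriv_congr_nhds hEv (k+1)
    rw [hLL] at happ
    have hpoly : iteratedFDeriv ℝ (k+1) (fun t : ℝ => ((k:ℂ)+3) * (t:ℂ)^(k+1)) 1
        (fun _ => (1:ℝ)) = ((k:ℂ)+3) * (((k+1).factorial : ℕ) : ℂ) := by
      rw [← iteratedDeriv_eq_iteratedFDeriv, QCk.iteratedDeriv_cpow (k+1) ((k:ℂ)+3)]
    rw [hpoly] at happ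
    rw [hc0def]
    exact happ.symm
  -- the polynomial contradiction
  obtain ⟨p, hp⟩ := QCk.exists_poly (k+1) (iteratedFDeriv ℝ (k+1) g 0).toMultilinearMap
  set c₁ : ℂ := ((k:ℂ)+3) * (((k+1).factorial : ℕ) : ℂ) with hc₁def
  have hcne : c₁ ≠ 0 := by
    apply mul_ne_zero
    · have hcast : ((k:ℂ)+3) = ((k+3:ℕ):ℂ) := by push_cast; ring
      rw [hcast, Ne, Nat.cast_eq_zero]
      omega
    · rw [Ne, Nat.cast_eq_zero]
      exact (k+1).factorial_ne_zero
  set q : Polynomial ℂ := Polynomial.X^2 * p - Polynomial.C c₁ with hqdef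
  have hqroot : ∀ θ : ℝ, q.eval (Complex.exp (↑θ*I)) = 0 := by
    intro θ
    have hw0 : Complex.exp (↑θ*I) ≠ 0 := Complex.exp_ne_zero _
    have hM : (iteratedFDeriv ℝ (k+1) g 0).toMultilinearMap (fun _ : Fin (k+1) => Complex.exp (↑θ*I))
        = iteratedFDeriv ℝ (k+1) g 0 (fun _ => Complex.exp (↑θ*I)) := rfl
    have hcw : conj (Complex.exp (↑θ*I)) * Complex.exp (↑θ*I) = 1 := by
      rw [← Complex.exp_conj, map_mul, Complex.conj_ofReal, Complex.conj_I, ← Complex.exp_add]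
      simp
    have hpow : (conj (Complex.exp (↑θ*I)))^(k+2) * (Complex.exp (↑θ*I))^(k+2) = 1 := by
      rw [← mul_pow, hcw, one_pow]
    rw [hqdef]
    simp only [Polynomial.eval_sub, Polynomial.eval_mul, Polynomial.eval_pow, Polynomial.eval_X,
      Polynomial.eval_C]
    rw [hp θ, hM, hcirc θ, hc0val]
    field_simp
    linear_combination c₁ * hpow
  have hIoo : Set.Infinite (Set.Ioo (0:ℝ) 1) := Set.Ioo_infinite (by norm_num)
  have hinj : Set.InjOn (fun θ : ℝ => Complex.exp (↑θ*I)) (Set.Ioo 0 1) := by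
    intro a ha b hb hab
    simp only at hab
    have ha' : a ∈ Set.Icc 0 Real.pi := ⟨le_of_lt ha.1, by nlinarith [Real.pi_gt_three, ha.2]⟩
    have hb' : b ∈ Set.Icc 0 Real.pi := ⟨le_of_lt hb.1, by nlinarith [Real.pi_gt_three, hb.2]⟩
    apply Real.injOn_cos ha' hb'
    rw [← Complex.exp_ofReal_mul_I_re, ← Complex.exp_ofReal_mul_I_re, hab]
  have hroots : {x : ℂ | q.IsRoot x}.Infinite := by
    apply Set.Infinite.mono ?_ (hIoo.image hinj)
    rintro x ⟨θ, _, rfl⟩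
    exact hqroot θ
  have hq0 : q = 0 := by
    by_contra hne
    exact hroots (Polynomial.finite_setOf_isRoot hne)
  have heval0 : q.eval 0 = 0 := by rw [hq0]; simp
  rw [hqdef] at heval0
  simp only [Polynomial.eval_sub, Polynomial.eval_mul, Polynomial.eval_pow, Polynomial.eval_X,
    Polynomial.eval_C] at heval0
  apply hcne
  have hsimp : (0:ℂ)^2 * p.eval 0 - c₁ = -c₁ := by ring
  rw [hsimp] at heval0
  exact neg_eq_zero.mp heval0

end
end
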